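/- arXiv:1402.1875 — 6 statements merged into one kernel-verified Lean document; each statement's English description precedes it below -/
import Mathlib

section
/- Let X be a metric space, A ⊆ X a subset, (δ_i)_{i∈ℕ} a sequence of positive real numbers, and {V'_i}_{i∈ℕ} a cover of A by sets that are open in the subspace A with diam(V'_i) < δ_i for every i. Then there exists a family {V_i}_{i∈ℕ} of sets open in X that covers A such that for every i one has V_i ∩ A = V'_i and diam(V_i) < 2δ_i, and the two families have the same nerve, i.e. for every finite set S of indices, ⋂_{i∈S} V_i ≠ ∅ if and only if ⋂_{i∈S} V'_i ≠ ∅. -/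
open EMetric ENNReal Set

/-- Let `X` be a metric space, `A ⊆ X`, `(δ i)` positive reals, and
`V' i` a countable cover of `A` by sets open in the subspace `A` with `diam (V' i) < δ i`.
Then there is a family `V i` of sets open in `X` covering `A` with `V i ∩ A = V' i`,
`diam (V i) < 2 * δ i`, and having the same nerve as `V'`. -/
theorem nerve_extension {X : Type*} [MetricSpace X] (A : Set X)
    (δ : ℕ → ℝ) (hδ : ∀ i, 0 < δ i)
    (V' : ℕ → Set X)
    (hV'A : ∀ i, V' i ⊆ A)
    (hV'open : ∀ i, ∃ W : Set X, IsOpen W ∧ V' i = W ∩ A)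
    (hV'cover : A ⊆ ⋃ i, V' i)
    (hV'diam : ∀ i, EMetric.diam (V' i) < ENNReal.ofReal (δ i)) :
    ∃ V : ℕ → Set X,
      (∀ i, IsOpen (V i)) ∧
      A ⊆ ⋃ i, V i ∧
      (∀ i, V i ∩ A = V' i) ∧
      (∀ i, EMetric.diam (V i) < ENNReal.ofReal (2 * δ i)) ∧
      (∀ S : Finset ℕ, (⋂ i ∈ S, V i).Nonempty ↔ (⋂ i ∈ S, V' i).Nonempty) := by
  classical
  set ε : ℕ → X → ℝ≥0∞ := fun i a =>
    min (ENNReal.ofReal (δ i / 2)) (EMetric.infEdist a (A \ V' i) / 2) with hεdef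
  set V : ℕ → Set X := fun i => ⋃ a ∈ V' i, EMetric.ball a (ε i a) with hVdef
  -- positivity of the radii
  have hεpos : ∀ i, ∀ a ∈ V' i, 0 < ε i a := by
    intro i a ha
    obtain ⟨W, hWopen, hWeq⟩ := hV'open i
    have haW : a ∈ W := by rw [hWeq] at ha; exact ha.1
    have hsub : A \ V' i ⊆ Wᶜ := by
      intro y hy hyW
      exact hy.2 (by rw [hWeq]; exact ⟨hyW, hy.1⟩)
    have hnc : a ∉ closure (A \ V' i) := fun hc =>
      (closure_minimal hsub hWopen.isClosed_compl hc) haW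
    have h1 : 0 < EMetric.infEdist a (A \ V' i) := by
      rw [pos_iff_ne_zero]
      intro h0
      exact hnc (EMetric.mem_closure_iff_infEdist_zero.2 h0)
    exact lt_min (ENNReal.ofReal_pos.2 (by linarith [hδ i]))
      (ENNReal.div_pos h1.ne' ENNReal.ofNat_ne_top)
  have hεle1 : ∀ i a, ε i a ≤ ENNReal.ofReal (δ i / 2) := fun i a => min_le_left _ _
  have hεle2 : ∀ i a, ε i a ≤ EMetric.infEdist a (A \ V' i) / 2 := fun i a => min_le_right _ _
  have hsubV : ∀ i, V' i ⊆ V i := fun i a ha =>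
    Set.mem_biUnion ha (EMetric.mem_ball_self (hεpos i a ha))
  refine ⟨V, ?_, ?_, ?_, ?_, ?_⟩
  · intro i
    exact isOpen_biUnion fun a _ => EMetric.isOpen_ball
  · exact hV'cover.trans (Set.iUnion_mono hsubV)
  · -- V i ∩ A = V' i
    intro i
    apply Set.Subset.antisymm
    · rintro x ⟨hxV, hxA⟩
      obtain ⟨a, ha, hball⟩ := Set.mem_iUnion₂.1 hxV
      by_contra hx
      have hmem : x ∈ A \ V' i := ⟨hxA, hx⟩
      have h1 : EMetric.infEdist a (A \ V' i) ≤ edist a x :=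
        EMetric.infEdist_le_edist_of_mem hmem
      have h2 : edist x a < EMetric.infEdist a (A \ V' i) / 2 :=
        lt_of_lt_of_le hball (hεle2 i a)
      have h3 : EMetric.infEdist a (A \ V' i) / 2 ≤ EMetric.infEdist a (A \ V' i) :=
        ENNReal.half_le_self
      rw [edist_comm] at h1
      exact absurd (h2.trans_le (h3.trans h1)) (lt_irrefl _)
    · intro a ha
      exact ⟨hsubV i ha, hV'A i ha⟩
  · -- diameter bound
    intro i
    have hD : ENNReal.ofReal (δ i / 2) ≠ ⊤ := ENNReal.ofReal_ne_top
    have hbound : EMetric.diam (V i) ≤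
        ENNReal.ofReal (δ i / 2) + EMetric.diam (V' i) + ENNReal.ofReal (δ i / 2) := by
      apply EMetric.diam_le
      intro x hx y hy
      obtain ⟨a, ha, hax⟩ := Set.mem_iUnion₂.1 hx
      obtain ⟨b, hb, hby⟩ := Set.mem_iUnion₂.1 hy
      have h1 : edist x a ≤ ENNReal.ofReal (δ i / 2) := le_of_lt (hax.trans_le (hεle1 i a))
      have h2 : edist y b ≤ ENNReal.ofReal (δ i / 2) := le_of_lt (hby.trans_le (hεle1 i b))
      have h3 : edist a b ≤ EMetric.diam (V' i) := EMetric.edist_le_diam_of_mem ha hb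
      calc edist x y ≤ edist x a + edist a b + edist b y := edist_triangle4 x a b y
        _ ≤ ENNReal.ofReal (δ i / 2) + EMetric.diam (V' i) + ENNReal.ofReal (δ i / 2) := by
            rw [edist_comm b y]; exact add_le_add (add_le_add h1 h3) h2
    refine hbound.trans_lt ?_
    have hlt : ENNReal.ofReal (δ i / 2) + EMetric.diam (V' i) + ENNReal.ofReal (δ i / 2) <
        ENNReal.ofReal (δ i / 2) + ENNReal.ofReal (δ i) + ENNReal.ofReal (δ i / 2) :=
      ENNReal.add_lt_add_right hD (ENNReal.add_lt_add_left hD (hV'diam i))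
    refine hlt.trans_le (le_of_eq ?_)
    rw [← ENNReal.ofReal_add (by linarith [hδ i]) (le_of_lt (hδ i)),
        ← ENNReal.ofReal_add (by linarith [hδ i]) (by linarith [hδ i])]
    ring_nf
  · -- same nerve
    intro S
    constructor
    · rintro ⟨x, hx⟩
      rcases S.eq_empty_or_nonempty with rfl | hS
      · exact ⟨x, by simp⟩
      have hmem : ∀ i ∈ S, x ∈ V i := fun i hi => Set.mem_iInter₂.1 hx i hi
      have hchoice : ∀ i, i ∈ S → ∃ a, a ∈ V' i ∧ x ∈ EMetric.ball a (ε i a) := by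
        intro i hi
        obtain ⟨a, ha, hb⟩ := Set.mem_iUnion₂.1 (hmem i hi)
        exact ⟨a, ha, hb⟩
      choose a ha hball using hchoice
      obtain ⟨j, hjS, hjmin⟩ := S.attach.exists_min_image
        (fun p => EMetric.infEdist (a p.1 p.2) (A \ V' p.1))
        (Finset.attach_nonempty_iff.2 hS)
      set aj := a j.1 j.2 with hajdef
      refine ⟨aj, Set.mem_iInter₂.2 ?_⟩
      intro i hi
      have hρmin : EMetric.infEdist aj (A \ V' j.1) ≤ EMetric.infEdist (a i hi) (A \ V' i) :=
        hjmin ⟨i, hi⟩ (Finset.mem_attach _ _)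
      have h1 : edist (a i hi) x < EMetric.infEdist (a i hi) (A \ V' i) / 2 := by
        rw [edist_comm]
        exact (hball i hi).trans_le (hεle2 i (a i hi))
      have h2 : edist x aj < EMetric.infEdist (a i hi) (A \ V' i) / 2 := by
        have := (hball j.1 j.2).trans_le (hεle2 j.1 aj)
        exact lt_of_lt_of_le this (ENNReal.div_le_div_right hρmin 2)
      have hkey : edist (a i hi) aj < EMetric.infEdist (a i hi) (A \ V' i) := by
        calc edist (a i hi) aj ≤ edist (a i hi) x + edist x aj := edist_triangle _ _ _
          _ < EMetric.infEdist (a i hi) (A \ V' i) / 2 +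
              EMetric.infEdist (a i hi) (A \ V' i) / 2 := ENNReal.add_lt_add h1 h2
          _ = EMetric.infEdist (a i hi) (A \ V' i) := ENNReal.add_halves _
      by_contra hnot
      have hmem' : aj ∈ A \ V' i := ⟨hV'A j.1 (ha j.1 j.2), hnot⟩
      exact absurd ((EMetric.infEdist_le_edist_of_mem hmem').trans_lt hkey) (lt_irrefl _)
    · rintro ⟨x, hx⟩
      exact ⟨x, Set.mem_iInter₂.2 fun i hi => hsubV i (Set.mem_iInter₂.1 hx i hi)⟩
end

section
/- Every bounded metric space X can be embedded as a closed subset of a convex subset of a Banach space: there exist a real Banach space E, a convex subset C ⊆ E, and an isometric embedding j : X → E such that j(X) ⊆ C and j(X) is closed in the subspace C. -/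
open Set Filter Topology

/-- Eilenberg–Kuratowski–Wojdyslawski. Every bounded metric space `X`
embeds isometrically as a closed subset of a convex subset of a real Banach space. -/
theorem bounded_metric_embeds_closed_in_convex_subset_of_banach
    {X : Type u} [MetricSpace X] (hX : Bornology.IsBounded (Set.univ : Set X)) :
    ∃ (E : Type u) (_ : NormedAddCommGroup E) (_ : NormedSpace ℝ E) (_ : CompleteSpace E)
      (C : Set E) (j : X → E),
      Convex ℝ C ∧
      (∀ x y : X, ‖j x - j y‖ = dist x y) ∧
      Set.range j ⊆ C ∧
      IsClosed {c : C | (c : E) ∈ Set.range j} := by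
  classical
  set E := BoundedContinuousFunction X ℝ
  have habs : ∀ x y z : X, |dist x y - dist x z| ≤ dist y z := by
    intro x y z
    have := abs_dist_sub_le y z x
    rwa [dist_comm y x, dist_comm z x] at this
  have hb : ∀ x : X, ∀ y z : X, dist (dist x y) (dist x z) ≤ Metric.diam (Set.univ : Set X) := by
    intro x y z
    rw [Real.dist_eq]
    calc |dist x y - dist x z| ≤ dist y z := habs x y z
    _ ≤ Metric.diam (Set.univ : Set X) :=
        Metric.dist_le_diam_of_mem hX (mem_univ _) (mem_univ _)
  set j : X → E := fun x =>
    BoundedContinuousFunction.mkOfBound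
      ⟨fun y => dist x y, (continuous_const.dist continuous_id)⟩
      (Metric.diam (Set.univ : Set X)) (hb x) with hj
  have hjapp : ∀ x y : X, j x y = dist x y := fun _ _ => rfl
  have hiso : ∀ x y : X, dist (j x) (j y) = dist x y := by
    intro x y
    apply le_antisymm
    · apply (BoundedContinuousFunction.dist_le dist_nonneg).2
      intro z
      rw [hjapp, hjapp, Real.dist_eq]
      exact abs_dist_sub_le x y z
    · calc dist x y = dist (j x y) (j y y) := by
            rw [hjapp, hjapp, dist_self, Real.dist_eq, sub_zero, abs_of_nonneg dist_nonneg]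
      _ ≤ dist (j x) (j y) := BoundedContinuousFunction.dist_coe_le_dist y
  set C : Set E := convexHull ℝ (Set.range j) with hC
  -- key: closure of range j within C equals range j
  have key : ∀ c : E, c ∈ C → c ∈ closure (Set.range j) → c ∈ Set.range j := by
    intro c hcC hccl
    obtain ⟨u, hu, hulim⟩ := mem_closure_iff_seq_limit.1 hccl
    choose x hx using hu
    -- c (x n) → 0
    have hc0 : Tendsto (fun n => c (x n)) atTop (𝓝 0) := by
      have h1 : ∀ n, dist (c (x n)) 0 ≤ dist c (u n) := by
        intro n
        have := BoundedContinuousFunction.dist_coe_le_dist (f := c) (g := u n) (x n)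
        rw [← hx n] at this ⊢
        rwa [hjapp, dist_self] at this
      have h2 : Tendsto (fun n => dist c (u n)) atTop (𝓝 0) := by
        simpa [dist_comm] using (tendsto_iff_dist_tendsto_zero.1 hulim)
      rw [tendsto_iff_dist_tendsto_zero]
      exact squeeze_zero (fun n => dist_nonneg) h1 h2
    -- decompose c as a convex combination
    rw [hC, convexHull_eq] at hcC
    obtain ⟨ι, t, w, z, hw0, hw1, hz, hcc⟩ := hcC
    obtain ⟨i, hit, hwi⟩ : ∃ i ∈ t, 0 < w i := by
      by_contra h
      push_neg at h
      have : ∑ k ∈ t, w k ≤ 0 := Finset.sum_nonpos h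
      linarith
    obtain ⟨a, ha⟩ := hz i hit
    -- evaluate c at x n and bound below by w i * dist a (x n)
    have hsum : c = ∑ k ∈ t, w k • z k := by
      rw [← hcc, Finset.centerMass_eq_of_sum_1 _ _ hw1]
    have hle : ∀ n, w i * dist a (x n) ≤ c (x n) := by
      intro n
      have hceval : c (x n) = ∑ k ∈ t, w k * (z k (x n)) := by
        rw [hsum]
        rw [BoundedContinuousFunction.coe_sum, Finset.sum_apply]
        rfl
      rw [hceval]
      have hterm : w i * (z i (x n)) = w i * dist a (x n) := by
        rw [← ha, hjapp]
      rw [← hterm]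
      apply Finset.single_le_sum (f := fun k => w k * (z k (x n))) _ hit
      intro k hk
      show 0 ≤ w k * (z k (x n))
      obtain ⟨b, hbk⟩ := hz k hk
      have : z k (x n) = dist b (x n) := by rw [← hbk, hjapp]
      rw [this]
      exact mul_nonneg (hw0 k hk) dist_nonneg
    -- hence dist a (x n) → 0
    have hd0 : Tendsto (fun n => dist a (x n)) atTop (𝓝 0) := by
      have h1 : Tendsto (fun n => w i * dist a (x n)) atTop (𝓝 0) :=
        squeeze_zero (fun n => mul_nonneg hwi.le dist_nonneg) hle hc0
      have h2 := h1.const_mul (w i)⁻¹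
      simp only [mul_zero] at h2
      convert h2 using 2 with n
      field_simp
    -- so x n → a, hence u n → j a, hence c = j a
    have hxa : Tendsto x atTop (𝓝 a) := by
      rw [tendsto_iff_dist_tendsto_zero]
      simpa [dist_comm] using hd0
    have hja : Tendsto u atTop (𝓝 (j a)) := by
      rw [tendsto_iff_dist_tendsto_zero]
      have : ∀ n, dist (u n) (j a) = dist (x n) a := by
        intro n; rw [← hx n, hiso]
      simp only [this]
      rw [← tendsto_iff_dist_tendsto_zero]
      exact hxa
    exact ⟨a, (tendsto_nhds_unique hja hulim).symm ▸ rfl⟩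
  refine ⟨E, inferInstance, inferInstance, inferInstance, C, j, convex_convexHull ℝ _,
    fun x y => by rw [← dist_eq_norm]; exact hiso x y, subset_convexHull ℝ _, ?_⟩
  have hset : {c : C | (c : E) ∈ Set.range j} = (Subtype.val : C → E) ⁻¹' closure (Set.range j) := by
    ext c
    simp only [mem_setOf_eq, mem_preimage]
    exact ⟨fun h => subset_closure h, fun h => key c c.2 h⟩
  rw [hset]
  exact isClosed_closure.preimage continuous_subtype_val
end

section
/- (Modified Walsh Lemma) Let X be a metric space, A a subset of X, K a metric ANR, and f : A → K a continuous map. Then for any function ε : K → (0,∞) (not necessarily continuous) there exist a set U open in X with A ⊆ U and a continuous map g : U → K such that: (1) for every u ∈ U there exists a_u ∈ A with d(g(u), f(a_u)) ≤ ε(f(a_u)); and (2) the restriction g|_A is homotopic to f. -/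
universe u

/-- A metrizable topological space `K` is a *metric ANR* if for every metrizable space `Z`
and every closed embedding `e : K → Z`, some open neighborhood of the image of `e` in `Z`
retracts onto the image of `e`. -/
def IsMetricANR (K : Type u) [TopologicalSpace K] : Prop :=
  TopologicalSpace.MetrizableSpace K ∧
  ∀ (Z : Type u) [TopologicalSpace Z], TopologicalSpace.MetrizableSpace Z →
    ∀ e : K → Z, Topology.IsClosedEmbedding e →
      ∃ (U : Set Z), IsOpen U ∧ Set.range e ⊆ U ∧
        ∃ r : C(U, Z), (∀ u : U, r u ∈ Set.range e) ∧
          ∀ (k : K) (h : e k ∈ U), r ⟨e k, h⟩ = e k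

open Set Metric Topology BoundedContinuousFunction

private lemma walsh_min_one_lip (a b : ℝ) : |min a 1 - min b 1| ≤ |a - b| := by
  have h1 := le_abs_self (a - b)
  have h2 := neg_abs_le (a - b)
  rcases le_total a 1 with h | h <;> rcases le_total b 1 with h' | h'
  · rw [min_eq_left h, min_eq_left h']
  · rw [min_eq_left h, min_eq_right h', abs_le]; constructor <;> linarith
  · rw [min_eq_right h, min_eq_left h', abs_le]; constructor <;> linarith
  · rw [min_eq_right h, min_eq_right h']; simp [abs_nonneg]

/-- The bounded Kuratowski-type embedding `k ↦ min (dist · k) 1` of a metric space into the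
Banach space of bounded continuous real functions on it. -/
noncomputable def walshEmb (K : Type u) [MetricSpace K] (k : K) : K →ᵇ ℝ :=
  BoundedContinuousFunction.mkOfBound
    ⟨fun x => min (dist x k) 1, (continuous_id.dist continuous_const).min continuous_const⟩ 1
    (fun x y => by
      simp only [ContinuousMap.coe_mk, Real.dist_eq]
      have hx : 0 ≤ min (dist x k) 1 := le_min dist_nonneg zero_le_one
      have hy : 0 ≤ min (dist y k) 1 := le_min dist_nonneg zero_le_one
      have hx1 : min (dist x k) 1 ≤ 1 := min_le_right _ _
      have hy1 : min (dist y k) 1 ≤ 1 := min_le_right _ _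
      rw [abs_le]; constructor <;> linarith)

lemma walshEmb_apply {K : Type u} [MetricSpace K] (k x : K) :
    walshEmb K k x = min (dist x k) 1 := rfl

lemma walshEmb_dist {K : Type u} [MetricSpace K] (k k' : K) :
    dist (walshEmb K k) (walshEmb K k') = min (dist k k') 1 := by
  refine le_antisymm ((BoundedContinuousFunction.dist_le
      (le_min dist_nonneg zero_le_one)).2 fun x => ?_) ?_
  · rw [walshEmb_apply, walshEmb_apply, Real.dist_eq]
    refine le_min (le_trans (walsh_min_one_lip _ _) ?_) ?_
    · have h := abs_dist_sub_le k k' x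
      rw [dist_comm k x, dist_comm k' x] at h
      exact h
    · have hx : 0 ≤ min (dist x k) 1 := le_min dist_nonneg zero_le_one
      have hy : 0 ≤ min (dist x k') 1 := le_min dist_nonneg zero_le_one
      have hx1 : min (dist x k) 1 ≤ 1 := min_le_right _ _
      have hy1 : min (dist x k') 1 ≤ 1 := min_le_right _ _
      rw [abs_le]; constructor <;> linarith
  · have h := BoundedContinuousFunction.dist_coe_le_dist
      (f := walshEmb K k) (g := walshEmb K k') k'
    rw [walshEmb_apply, walshEmb_apply, dist_self, min_eq_left zero_le_one,
      Real.dist_eq, sub_zero, abs_of_nonneg (le_min dist_nonneg zero_le_one)] at h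
    rw [dist_comm k k']
    exact h

lemma walshEmb_isUniformEmbedding (K : Type u) [MetricSpace K] :
    IsUniformEmbedding (walshEmb K) := by
  rw [Metric.isUniformEmbedding_iff']
  constructor
  · intro ε hε
    exact ⟨ε, hε, fun {a b} h => by
      rw [walshEmb_dist]; exact lt_of_le_of_lt (min_le_left _ _) h⟩
  · intro δ hδ
    refine ⟨min δ 1, lt_min hδ one_pos, fun {a b} h => ?_⟩
    rw [walshEmb_dist] at h
    rcases le_total (dist a b) 1 with h1 | h1
    · rw [min_eq_left h1] at h
      exact lt_of_lt_of_le h (min_le_left _ _)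
    · rw [min_eq_right h1] at h
      have := min_le_right δ 1
      linarith [lt_of_lt_of_le h (min_le_right δ 1)]

/-- Modified Walsh Lemma. Let `X` be a metric space, `A ⊆ X`, `K` a metric
ANR, and `f : A → K` continuous. Then for any `ε : K → (0, ∞)` there is an open `U ⊇ A` and a
continuous `g : U → K` such that every `g u` is `ε`-close to some value `f a_u`, and the
restriction of `g` to `A` is homotopic to `f`. -/
theorem modified_walsh_lemma {X : Type u} [MetricSpace X] (A : Set X)
    {K : Type u} [MetricSpace K] (hK : IsMetricANR K)
    (f : C(A, K)) (ε : K → ℝ) (hε : ∀ y, 0 < ε y) :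
    ∃ (U : Set X) (hU : IsOpen U) (hAU : A ⊆ U) (g : C(U, K)),
      (∀ u : U, ∃ a : A, dist (g u) (f a) ≤ ε (f a)) ∧
      (g.comp ⟨Set.inclusion hAU, continuous_inclusion hAU⟩).Homotopic f := by
  classical
  rcases A.eq_empty_or_nonempty with rfl | hAne
  · -- trivial case: `A = ∅`
    haveI : IsEmpty ↥(∅ : Set X) := Set.isEmpty_coe_sort.2 rfl
    refine ⟨∅, isOpen_empty, le_refl _, ⟨fun x => isEmptyElim x,
      continuous_iff_continuousAt.2 fun x => isEmptyElim x⟩,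
      fun u => isEmptyElim u, ?_⟩
    have h : (ContinuousMap.comp ⟨fun x => isEmptyElim x,
        continuous_iff_continuousAt.2 fun x => isEmptyElim x⟩
        ⟨Set.inclusion (le_refl _), continuous_inclusion (le_refl _)⟩) = f :=
      ContinuousMap.ext fun a => isEmptyElim a
    exact h ▸ ContinuousMap.Homotopic.refl f
  · -- main case: `A` nonempty
    obtain ⟨x₀, hx₀⟩ := hAne
    haveI : Nonempty ↥A := ⟨⟨x₀, hx₀⟩⟩
    set e : K → (K →ᵇ ℝ) := walshEmb K with he_def
    have he_emb : IsUniformEmbedding e := walshEmb_isUniformEmbedding K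
    set C : Set (K →ᵇ ℝ) := convexHull ℝ (range e) with hC_def
    have heC : ∀ k, e k ∈ C := fun k => subset_convexHull ℝ _ (mem_range_self k)
    set e' : K → ↥C := fun k => ⟨e k, heC k⟩ with he'_def
    have he'_emb : Topology.IsEmbedding e' := he_emb.isEmbedding.codRestrict C heC
    -- the image of `e` is closed in the convex hull `C` (Kuratowski–Wojdysławski)
    have hkey : ∀ z : K →ᵇ ℝ, z ∈ C → z ∈ closure (range e) → z ∈ range e := by
      intro z hzC hzcl
      obtain ⟨ι, hι, w, v, hw0, hw1, hvmem, hsum⟩ :=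
        mem_convexHull_iff_exists_fintype.1 hzC
      choose κ hκ using hvmem
      obtain ⟨uu, huu_mem, huu_lim⟩ := mem_closure_iff_seq_limit.1 hzcl
      choose σ hσ using huu_mem
      have hposw : ∃ i, 0 < w i := by
        by_contra hcon
        push_neg at hcon
        have hzero : ∀ i, w i = 0 := fun i => le_antisymm (hcon i) (hw0 i)
        rw [Finset.sum_congr rfl fun i _ => hzero i] at hw1
        simp at hw1
      obtain ⟨i₀, hi₀⟩ := hposw
      refine ⟨κ i₀, ?_⟩
      have hz : ∀ x : K, z x = ∑ i, w i * v i x := by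
        intro x
        rw [← hsum]
        rw [show ((∑ i, w i • v i : K →ᵇ ℝ) x) = ∑ i, (w i • v i) x from
          BoundedContinuousFunction.sum_apply _ _ _]
        simp [smul_eq_mul]
      have hvnonneg : ∀ i (x : K), 0 ≤ v i x := by
        intro i x
        rw [← hκ i, walshEmb_apply]
        exact le_min dist_nonneg zero_le_one
      have hbound : ∀ n, dist (uu n) (e (κ i₀)) ≤ dist (uu n) z / w i₀ := by
        intro n
        rw [le_div_iff₀ hi₀, mul_comm]
        have e1 : dist (uu n) (e (κ i₀)) = v i₀ (σ n) := by
          rw [← hσ n, ← hκ i₀]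
          show dist (walshEmb K (σ n)) (walshEmb K (κ i₀)) =
            walshEmb K (κ i₀) (σ n)
          rw [walshEmb_dist, walshEmb_apply]
        have e2 : w i₀ * v i₀ (σ n) ≤ z (σ n) := by
          rw [hz (σ n)]
          exact Finset.single_le_sum
            (fun i _ => mul_nonneg (hw0 i) (hvnonneg i (σ n))) (Finset.mem_univ i₀)
        have e3 : z (σ n) ≤ dist (uu n) z := by
          have h5 : uu n (σ n) = 0 := by
            rw [← hσ n]
            show min (dist (σ n) (σ n)) 1 = 0
            rw [dist_self]
            exact min_eq_left zero_le_one
          have hznn : 0 ≤ z (σ n) := by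
            rw [hz (σ n)]
            exact Finset.sum_nonneg fun i _ => mul_nonneg (hw0 i) (hvnonneg i (σ n))
          have h4 := BoundedContinuousFunction.dist_coe_le_dist
            (f := uu n) (g := z) (σ n)
          rw [h5, Real.dist_eq, zero_sub, abs_neg, abs_of_nonneg hznn] at h4
          exact h4
        calc w i₀ * dist (uu n) (e (κ i₀)) = w i₀ * v i₀ (σ n) := by
              rw [e1]
          _ ≤ z (σ n) := e2
          _ ≤ dist (uu n) z := e3
      have hlim0 : Filter.Tendsto (fun n => dist (uu n) z / w i₀)
          Filter.atTop (nhds 0) := by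
        have h6 : Filter.Tendsto (fun n => dist (uu n) z) Filter.atTop (nhds 0) :=
          tendsto_iff_dist_tendsto_zero.1 huu_lim
        simpa using h6.div_const (w i₀)
      have hlim : Filter.Tendsto uu Filter.atTop (nhds (e (κ i₀))) :=
        tendsto_iff_dist_tendsto_zero.2
          (squeeze_zero (fun n => dist_nonneg) hbound hlim0)
      exact (tendsto_nhds_unique huu_lim hlim).symm
    have hcl : IsClosed (range e') := by
      have hre : range e' = Subtype.val ⁻¹' closure (range e) := by
        ext z
        constructor
        · rintro ⟨k, rfl⟩
          exact subset_closure (mem_range_self k)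
        · intro hz
          obtain ⟨k, hk⟩ := hkey z.1 z.2 hz
          exact ⟨k, Subtype.ext hk⟩
      rw [hre]
      exact isClosed_closure.preimage continuous_subtype_val
    -- apply the ANR property
    obtain ⟨UZ, hUZo, hUZr, r, hrmem, hrfix⟩ := hK.2 ↥C inferInstance e' ⟨he'_emb, hcl⟩
    have hrange' : ∀ k, e' k ∈ UZ := fun k => hUZr (mem_range_self k)
    -- choose radii of good balls around points of `e'(K)`
    have hρex : ∀ k : K, ∃ ρ, 0 < ρ ∧ ball (e' k) ρ ⊆ UZ ∧
        ∀ q : ↥UZ, dist (q : ↥C) (e' k) < ρ →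
          dist ((r q : ↥C)) (e' k) < min (ε k) 1 / 2 := by
      intro k
      obtain ⟨ρ₁, hρ₁pos, hρ₁⟩ := Metric.isOpen_iff.1 hUZo _ (hrange' k)
      have hcont : ContinuousAt r (⟨e' k, hrange' k⟩ : ↥UZ) := r.continuous.continuousAt
      obtain ⟨ρ₂, hρ₂pos, hρ₂⟩ := Metric.continuousAt_iff.1 hcont (min (ε k) 1 / 2)
        (by have := hε k; positivity)
      refine ⟨min ρ₁ ρ₂, lt_min hρ₁pos hρ₂pos,
        fun y hy => hρ₁ (lt_of_lt_of_le (mem_ball.1 hy) (min_le_left _ _)), ?_⟩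
      intro q hq
      have h7 : dist q (⟨e' k, hrange' k⟩ : ↥UZ) < ρ₂ := by
        rw [Subtype.dist_eq]
        exact lt_of_lt_of_le hq (min_le_right _ _)
      have h8 := hρ₂ h7
      rw [hrfix k (hrange' k)] at h8
      exact h8
    choose ρ hρpos hρball hρr using hρex
    set η : K → ℝ := fun k => ρ k / 2 with hη_def
    have hηpos : ∀ k, 0 < η k := fun k => half_pos (hρpos k)
    have hηρ : ∀ k, η k < ρ k := fun k => half_lt_self (hρpos k)
    -- choose moduli of continuity for `f`
    have hδex : ∀ a : ↥A, ∃ δ, 0 < δ ∧ δ ≤ 1 ∧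
        ∀ a' : ↥A, dist (a' : X) (a : X) < 4 * δ → dist (f a') (f a) < η (f a) := by
      intro a
      obtain ⟨δ₀, hδ₀pos, hδ₀⟩ := Metric.continuousAt_iff.1
        (f.continuous.continuousAt (x := a)) (η (f a)) (hηpos _)
      refine ⟨min (δ₀ / 4) 1, lt_min (by positivity) one_pos, min_le_right _ _, ?_⟩
      intro a' ha'
      apply hδ₀
      show dist a' a < δ₀
      rw [Subtype.dist_eq]
      calc dist (a' : X) (a : X) < 4 * min (δ₀ / 4) 1 := ha'
        _ ≤ 4 * (δ₀ / 4) := by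
            have := min_le_left (δ₀ / 4) 1
            linarith
        _ = δ₀ := by ring
    choose δ hδpos hδ1 hδf using hδex
    -- the open set `U`
    refine ⟨⋃ a : ↥A, ball (a : X) (δ a), isOpen_iUnion fun a => isOpen_ball,
      fun x hx => mem_iUnion.2 ⟨⟨x, hx⟩, mem_ball_self (hδpos _)⟩, ?_⟩
    set U : Set X := ⋃ a : ↥A, ball (a : X) (δ a) with hU_def
    have hAU : A ⊆ U := fun x hx => mem_iUnion.2 ⟨⟨x, hx⟩, mem_ball_self (hδpos _)⟩
    -- choice of an almost-maximal center for each point of `U`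
    have hastar : ∀ x : ↥U, ∃ b : ↥A, dist (x : X) (b : X) < δ b ∧
        ∀ a : ↥A, dist (x : X) (a : X) < δ a → δ a ≤ 2 * δ b := by
      intro x
      obtain ⟨a₁, ha₁⟩ := mem_iUnion.1 x.2
      rw [mem_ball] at ha₁
      set S : Set ↥A := {a : ↥A | dist (x : X) (a : X) < δ a} with hS_def
      have ha₁S : a₁ ∈ S := ha₁
      have hbdd : BddAbove (δ '' S) := by
        refine ⟨1, ?_⟩
        rintro _ ⟨a, _, rfl⟩
        exact hδ1 a
      have hM1 : ∀ a ∈ S, δ a ≤ sSup (δ '' S) :=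
        fun a ha => le_csSup hbdd ⟨a, ha, rfl⟩
      have hMpos : 0 < sSup (δ '' S) := lt_of_lt_of_le (hδpos a₁) (hM1 _ ha₁S)
      obtain ⟨_, ⟨b, hbS, rfl⟩, hb⟩ := exists_lt_of_lt_csSup
        (⟨δ a₁, a₁, ha₁S, rfl⟩ : (δ '' S).Nonempty)
        (by linarith : sSup (δ '' S) / 2 < sSup (δ '' S))
      exact ⟨b, hbS, fun a ha => le_trans (hM1 a ha) (by linarith)⟩
    choose astar hastar1 hastar2 using hastar
    -- the convex-valued targets
    set t : ↥U → Set (K →ᵇ ℝ) := fun x =>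
      C ∩ closedBall (e (f (astar x))) (η (f (astar x))) with ht_def
    have htconv : ∀ x, Convex ℝ (t x) := fun x =>
      (convex_convexHull ℝ _).inter (convex_closedBall _ _)
    have htloc : ∀ x : ↥U, ∃ c, ∀ᶠ y in nhds x, c ∈ t y := by
      intro x
      refine ⟨e (f (astar x)), ?_⟩
      have hopen : IsOpen {y : ↥U | dist (y : X) ((astar x : ↥A) : X) < δ (astar x)} :=
        isOpen_lt (continuous_subtype_val.dist continuous_const) continuous_const
      filter_upwards [hopen.mem_nhds (hastar1 x)] with y hy
      have h1 : δ (astar x) ≤ 2 * δ (astar y) := hastar2 y (astar x) hy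
      have h2 : dist ((astar x : ↥A) : X) ((astar y : ↥A) : X) < 4 * δ (astar y) := by
        calc dist ((astar x : ↥A) : X) ((astar y : ↥A) : X)
            ≤ dist ((astar x : ↥A) : X) (y : X) + dist (y : X) ((astar y : ↥A) : X) :=
              dist_triangle _ _ _
          _ < δ (astar x) + δ (astar y) := by
              have h2a : dist ((astar x : ↥A) : X) (y : X) < δ (astar x) := by
                rw [dist_comm]; exact hy
              exact add_lt_add h2a (hastar1 y)
          _ ≤ 2 * δ (astar y) + δ (astar y) := by linarith
          _ < 4 * δ (astar y) := by linarith [hδpos (astar y)]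
      have h3 : dist (f (astar x)) (f (astar y)) < η (f (astar y)) :=
        hδf (astar y) (astar x) h2
      refine ⟨heC _, ?_⟩
      rw [mem_closedBall, walshEmb_dist]
      exact le_trans (min_le_left _ _) h3.le
    obtain ⟨g₀, hg₀⟩ := exists_continuous_forall_mem_convex_of_local_const htconv htloc
    have hg₀C : ∀ x, g₀ x ∈ C := fun x => (hg₀ x).1
    have hg₀b : ∀ x : ↥U, dist (g₀ x) (e (f (astar x))) ≤ η (f (astar x)) :=
      fun x => mem_closedBall.1 (hg₀ x).2
    -- membership in the domain of the retraction
    have hmemUZ : ∀ {w : K →ᵇ ℝ} (hw : w ∈ C) (k : K), dist w (e k) ≤ η k →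
        (⟨w, hw⟩ : ↥C) ∈ UZ := by
      intro w hw k hdist
      apply hρball k
      rw [mem_ball]
      show dist (⟨w, hw⟩ : ↥C) (e' k) < ρ k
      rw [Subtype.dist_eq]
      exact lt_of_le_of_lt hdist (hηρ k)
    have hqmem : ∀ x : ↥U, (⟨g₀ x, hg₀C x⟩ : ↥C) ∈ UZ :=
      fun x => hmemUZ (hg₀C x) _ (hg₀b x)
    -- the inverse of the embedding
    set Φ : K ≃ₜ ↥(range e') := he'_emb.toHomeomorph with hΦ_def
    have hΦval : ∀ k, ((Φ k : ↥(range e')) : ↥C) = e' k := fun k => rfl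
    have hΦsymm : ∀ y : ↥(range e'), e' (Φ.symm y) = (y : ↥C) := by
      intro y
      have := Φ.apply_symm_apply y
      calc e' (Φ.symm y) = ((Φ (Φ.symm y) : ↥(range e')) : ↥C) := (hΦval _).symm
        _ = (y : ↥C) := by rw [this]
    -- the map `g`
    have hgcont : Continuous fun x : ↥U =>
        Φ.symm ⟨r ⟨⟨g₀ x, hg₀C x⟩, hqmem x⟩, hrmem _⟩ := by
      apply Φ.symm.continuous.comp
      apply Continuous.subtype_mk
      exact r.continuous.comp
        (Continuous.subtype_mk (Continuous.subtype_mk g₀.continuous _) _)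
    refine ⟨⟨fun x => Φ.symm ⟨r ⟨⟨g₀ x, hg₀C x⟩, hqmem x⟩, hrmem _⟩, hgcont⟩, ?_, ?_⟩
    · -- approximation property
      intro x
      refine ⟨astar x, ?_⟩
      show dist (Φ.symm ⟨r ⟨⟨g₀ x, hg₀C x⟩, hqmem x⟩, hrmem _⟩) (f (astar x)) ≤
        ε (f (astar x))
      set k := f (astar x) with hk_def
      have h1 : dist ((⟨⟨g₀ x, hg₀C x⟩, hqmem x⟩ : ↥UZ) : ↥C) (e' k) < ρ k := by
        show dist (⟨g₀ x, hg₀C x⟩ : ↥C) (e' k) < ρ k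
        rw [Subtype.dist_eq]
        exact lt_of_le_of_lt (hg₀b x) (hηρ k)
      have h2 := hρr k ⟨⟨g₀ x, hg₀C x⟩, hqmem x⟩ h1
      have h3 : e' (Φ.symm ⟨r ⟨⟨g₀ x, hg₀C x⟩, hqmem x⟩, hrmem _⟩) =
          (r ⟨⟨g₀ x, hg₀C x⟩, hqmem x⟩ : ↥C) := hΦsymm _
      rw [← h3] at h2
      rw [show dist (e' (Φ.symm ⟨r ⟨⟨g₀ x, hg₀C x⟩, hqmem x⟩, hrmem _⟩)) (e' k) =
          min (dist (Φ.symm ⟨r ⟨⟨g₀ x, hg₀C x⟩, hqmem x⟩, hrmem _⟩) k) 1 from by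
        rw [Subtype.dist_eq]; exact walshEmb_dist _ _] at h2
      have hmin1 : min (ε k) 1 ≤ 1 := min_le_right _ _
      have hminε : min (ε k) 1 ≤ ε k := min_le_left _ _
      rcases le_total (dist (Φ.symm ⟨r ⟨⟨g₀ x, hg₀C x⟩, hqmem x⟩, hrmem _⟩) k) 1
        with hle | hle
      · rw [min_eq_left hle] at h2
        have := hε k
        linarith
      · rw [min_eq_right hle] at h2
        linarith
    · -- the homotopy
      have hσmem : ∀ (a : ↥A) (s : ℝ), 0 ≤ s → s ≤ 1 →
          ((1 - s) • g₀ (Set.inclusion hAU a) + s • e (f a) ∈ C) ∧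
          dist ((1 - s) • g₀ (Set.inclusion hAU a) + s • e (f a))
            (e (f (astar (Set.inclusion hAU a)))) ≤ η (f (astar (Set.inclusion hAU a))) := by
        intro a s hs0 hs1
        have hfa : dist (e (f a)) (e (f (astar (Set.inclusion hAU a)))) ≤
            η (f (astar (Set.inclusion hAU a))) := by
          have h2 : dist (a : X) ((astar (Set.inclusion hAU a) : ↥A) : X) <
              4 * δ (astar (Set.inclusion hAU a)) := by
            have h2a := hastar1 (Set.inclusion hAU a)
            have h2b : ((Set.inclusion hAU a : ↥U) : X) = (a : X) := rfl
            rw [h2b] at h2a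
            linarith [hδpos (astar (Set.inclusion hAU a))]
          have h3 := hδf (astar (Set.inclusion hAU a)) a h2
          rw [walshEmb_dist]
          exact le_trans (min_le_left _ _) h3.le
        constructor
        · exact (convex_convexHull ℝ (range e)) (hg₀C (Set.inclusion hAU a))
            (heC (f a)) (by linarith) hs0 (by ring)
        · have hball := convex_closedBall (e (f (astar (Set.inclusion hAU a))))
            (η (f (astar (Set.inclusion hAU a))))
          have hmem := hball (mem_closedBall.2 (hg₀b (Set.inclusion hAU a)))
            (mem_closedBall.2 hfa) (by linarith : (0:ℝ) ≤ 1 - s) hs0 (by ring)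
          exact mem_closedBall.1 hmem
      have hHC : ∀ p : unitInterval × ↥A,
          (1 - (p.1 : ℝ)) • g₀ (Set.inclusion hAU p.2) + (p.1 : ℝ) • e (f p.2) ∈ C :=
        fun p => (hσmem p.2 p.1 p.1.2.1 p.1.2.2).1
      have hHU : ∀ p : unitInterval × ↥A, (⟨_, hHC p⟩ : ↥C) ∈ UZ :=
        fun p => hmemUZ (hHC p) _ (hσmem p.2 p.1 p.1.2.1 p.1.2.2).2
      have hHcont : Continuous fun p : unitInterval × ↥A =>
          Φ.symm ⟨r ⟨⟨(1 - (p.1 : ℝ)) • g₀ (Set.inclusion hAU p.2) +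
            (p.1 : ℝ) • e (f p.2), hHC p⟩, hHU p⟩, hrmem _⟩ := by
        apply Φ.symm.continuous.comp
        apply Continuous.subtype_mk
        apply Continuous.comp r.continuous
        apply Continuous.subtype_mk
        apply Continuous.subtype_mk
        have hcι : Continuous fun p : unitInterval × ↥A => g₀ (Set.inclusion hAU p.2) :=
          g₀.continuous.comp ((continuous_inclusion hAU).comp continuous_snd)
        have hct : Continuous fun p : unitInterval × ↥A => (p.1 : ℝ) :=
          continuous_subtype_val.comp continuous_fst
        have hce : Continuous fun p : unitInterval × ↥A => e (f p.2) :=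
          he_emb.isEmbedding.continuous.comp (f.continuous.comp continuous_snd)
        exact ((continuous_const.sub hct).smul hcι).add (hct.smul hce)
      refine ⟨⟨⟨fun p => Φ.symm ⟨r ⟨⟨(1 - (p.1 : ℝ)) • g₀ (Set.inclusion hAU p.2) +
        (p.1 : ℝ) • e (f p.2), hHC p⟩, hHU p⟩, hrmem _⟩, hHcont⟩, ?_, ?_⟩⟩
      · -- value at 0
        intro a
        have hpt : (⟨⟨(1 - ((0 : unitInterval) : ℝ)) • g₀ (Set.inclusion hAU a) +
            ((0 : unitInterval) : ℝ) • e (f a), hHC (0, a)⟩, hHU (0, a)⟩ : ↥UZ) =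
            ⟨⟨g₀ (Set.inclusion hAU a), hg₀C _⟩, hqmem _⟩ := by
          apply Subtype.ext
          apply Subtype.ext
          show (1 - ((0 : unitInterval) : ℝ)) • g₀ (Set.inclusion hAU a) +
            ((0 : unitInterval) : ℝ) • e (f a) = g₀ (Set.inclusion hAU a)
          norm_num
        show Φ.symm ⟨r _, hrmem _⟩ = _
        rw [hpt]
        rfl
      · -- value at 1
        intro a
        have hpt : (⟨⟨(1 - ((1 : unitInterval) : ℝ)) • g₀ (Set.inclusion hAU a) +
            ((1 : unitInterval) : ℝ) • e (f a), hHC (1, a)⟩, hHU (1, a)⟩ : ↥UZ) =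
            ⟨e' (f a), hrange' (f a)⟩ := by
          apply Subtype.ext
          apply Subtype.ext
          show (1 - ((1 : unitInterval) : ℝ)) • g₀ (Set.inclusion hAU a) +
            ((1 : unitInterval) : ℝ) • e (f a) = e (f a)
          norm_num
        have hval : (⟨r ⟨⟨(1 - ((1 : unitInterval) : ℝ)) • g₀ (Set.inclusion hAU a) +
            ((1 : unitInterval) : ℝ) • e (f a), hHC (1, a)⟩, hHU (1, a)⟩, hrmem _⟩ :
            ↥(range e')) = Φ (f a) := by
          apply Subtype.ext
          show (r ⟨⟨(1 - ((1 : unitInterval) : ℝ)) • g₀ (Set.inclusion hAU a) +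
            ((1 : unitInterval) : ℝ) • e (f a), hHC (1, a)⟩, hHU (1, a)⟩ : ↥C) =
            ((Φ (f a) : ↥(range e')) : ↥C)
          rw [hpt, hrfix (f a) (hrange' (f a)), hΦval]
        show Φ.symm ⟨r _, hrmem _⟩ = f a
        rw [hval]
        exact Φ.symm_apply_apply (f a)
end

section
/- Let K be a metric ANR. Then there exists a function ε : K → (0,∞) (not necessarily continuous) such that for every metric space X and all continuous maps f, g : X → K that are W-close with respect to the cover W = {B(y, ε(y)) : y ∈ K} — that is, for every x ∈ X there exists y ∈ K with d(f(x), y) < ε(y) and d(g(x), y) < ε(y) — the maps f and g are homotopic. -/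
universe u v

open Set Metric Topology

namespace EpsilonHomotopyAux

variable {K : Type u} [MetricSpace K]

/-- Kuratowski-type embedding with basepoint `x₀`. -/
noncomputable def theta (x₀ x : K) : BoundedContinuousFunction K ℝ :=
  ⟨⟨fun z => dist x z - dist x₀ z, by fun_prop⟩,
   ⟨2 * dist x x₀, fun a b => by
      have ha := abs_le.mp (abs_dist_sub_le x x₀ a)
      have hb := abs_le.mp (abs_dist_sub_le x x₀ b)
      rw [Real.dist_eq, abs_le]
      dsimp only
      constructor <;> [linarith [ha.1, hb.2]; linarith [ha.2, hb.1]]⟩⟩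

@[simp] lemma theta_apply (x₀ x z : K) : theta x₀ x z = dist x z - dist x₀ z := rfl

lemma isometry_theta (x₀ : K) : Isometry (theta x₀) := by
  apply Isometry.of_dist_eq
  intro x y
  refine le_antisymm ((BoundedContinuousFunction.dist_le dist_nonneg).2 fun z => ?_) ?_
  · rw [Real.dist_eq, theta_apply, theta_apply]
    have h := abs_dist_sub_le x y z
    calc |dist x z - dist x₀ z - (dist y z - dist x₀ z)| = |dist x z - dist y z| := by ring_nf
      _ ≤ dist x y := h
  · have h := BoundedContinuousFunction.dist_coe_le_dist
      (f := theta x₀ x) (g := theta x₀ y) y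
    rw [Real.dist_eq, theta_apply, theta_apply, dist_self] at h
    calc dist x y = |dist x y - dist x₀ y - (0 - dist x₀ y)| := by
          rw [show dist x y - dist x₀ y - (0 - dist x₀ y) = dist x y by ring,
            abs_of_nonneg dist_nonneg]
      _ ≤ dist (theta x₀ x) (theta x₀ y) := h

/-- Kuratowski–Wojdysławski: the image of `theta` is closed in its convex hull. -/
lemma mem_range_of_mem_closure (x₀ : K) {v : BoundedContinuousFunction K ℝ}
    (hv : v ∈ convexHull ℝ (range (theta x₀)))
    (hcl : v ∈ closure (range (theta x₀))) : v ∈ range (theta x₀) := by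
  rw [convexHull_eq] at hv
  obtain ⟨ι, t, w, z, hw0, hw1, hz, hcm⟩ := hv
  have hex : ∃ i ∈ t, 0 < w i := by
    by_contra h
    push_neg at h
    have : ∑ j ∈ t, w j ≤ 0 := Finset.sum_nonpos h
    linarith
  obtain ⟨i, hit, hwi⟩ := hex
  obtain ⟨x, hx⟩ := hz i hit
  have key : ∀ y : K, w i * dist x y ≤ dist (theta x₀ y) v := by
    intro y
    have hv_y : v y = ∑ j ∈ t, w j * z j y := by
      rw [← hcm, Finset.centerMass_eq_of_sum_1 _ _ hw1]
      simp [BoundedContinuousFunction.coe_sum, Finset.sum_apply]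
    have hterm : ∀ j ∈ t, 0 ≤ w j * (z j y + dist x₀ y) := by
      intro j hj
      obtain ⟨u, hu⟩ := hz j hj
      refine mul_nonneg (hw0 j hj) ?_
      rw [← hu, theta_apply]
      have := dist_nonneg (x := u) (y := y)
      linarith
    have hsum : ∑ j ∈ t, w j * (z j y + dist x₀ y) = v y + dist x₀ y := by
      rw [hv_y]
      rw [show (fun j => w j * (z j y + dist x₀ y)) = fun j =>
        w j * z j y + w j * dist x₀ y from funext fun j => by ring]
      rw [Finset.sum_add_distrib, ← Finset.sum_mul, hw1, one_mul]
    have h1 : w i * dist x y ≤ v y + dist x₀ y := by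
      have := Finset.single_le_sum hterm hit
      rw [hsum] at this
      calc w i * dist x y = w i * (z i y + dist x₀ y) := by rw [← hx, theta_apply]; ring_nf
        _ ≤ v y + dist x₀ y := this
    have h2 : v y + dist x₀ y ≤ dist (theta x₀ y) v := by
      have h := BoundedContinuousFunction.dist_coe_le_dist (f := theta x₀ y) (g := v) y
      rw [Real.dist_eq, theta_apply, dist_self] at h
      calc v y + dist x₀ y ≤ |v y + dist x₀ y| := le_abs_self _
        _ = |0 - dist x₀ y - v y| := by rw [← abs_neg]; ring_nf
        _ ≤ dist (theta x₀ y) v := h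
    linarith
  refine ⟨x, ?_⟩
  have key' : ∀ δ > (0:ℝ), dist (theta x₀ x) v ≤ (1 + (w i)⁻¹) * δ := by
    intro δ hδ
    obtain ⟨b, hb, hdb⟩ := Metric.mem_closure_iff.mp hcl δ hδ
    obtain ⟨y, rfl⟩ := hb
    have hk := key y
    have hxy : dist x y ≤ (w i)⁻¹ * dist (theta x₀ y) v := by
      have h' := mul_le_mul_of_nonneg_left hk (inv_nonneg.mpr hwi.le)
      rwa [inv_mul_cancel_left₀ hwi.ne'] at h'
    have hvy : dist (theta x₀ y) v < δ := by rwa [dist_comm] at hdb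
    calc dist (theta x₀ x) v ≤ dist (theta x₀ x) (theta x₀ y) + dist (theta x₀ y) v :=
          dist_triangle _ _ _
      _ = dist x y + dist (theta x₀ y) v := by rw [(isometry_theta x₀).dist_eq]
      _ ≤ (w i)⁻¹ * dist (theta x₀ y) v + dist (theta x₀ y) v := by linarith
      _ = (1 + (w i)⁻¹) * dist (theta x₀ y) v := by ring
      _ ≤ (1 + (w i)⁻¹) * δ := by
          have : (0:ℝ) ≤ 1 + (w i)⁻¹ := by positivity
          nlinarith [dist_nonneg (x := theta x₀ y) (y := v)]
  have h0 : dist (theta x₀ x) v ≤ 0 := by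
    by_contra h
    push_neg at h
    have hcpos : (0:ℝ) < 1 + (w i)⁻¹ := by positivity
    have := key' (dist (theta x₀ x) v / (2 * (1 + (w i)⁻¹))) (by positivity)
    have heq : (1 + (w i)⁻¹) * (dist (theta x₀ x) v / (2 * (1 + (w i)⁻¹)))
        = dist (theta x₀ x) v / 2 := by field_simp
    rw [heq] at this
    linarith
  exact eq_of_dist_eq_zero (le_antisymm h0 dist_nonneg)

/-- The embedding of `K` into the convex hull of the image of `theta`. -/
noncomputable def emb (x₀ : K) (x : K) :
    ↥(convexHull ℝ (range (theta x₀))) :=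
  ⟨theta x₀ x, subset_convexHull ℝ _ ⟨x, rfl⟩⟩

lemma isometry_emb (x₀ : K) : Isometry (emb x₀) := by
  apply Isometry.of_dist_eq
  intro x y
  rw [Subtype.dist_eq]
  exact (isometry_theta x₀).dist_eq x y

lemma isClosedEmbedding_emb (x₀ : K) : Topology.IsClosedEmbedding (emb x₀) := by
  refine ⟨(isometry_emb x₀).isEmbedding, ?_⟩
  have hset : range (emb x₀) = Subtype.val ⁻¹' (closure (range (theta x₀))) := by
    ext z
    constructor
    · rintro ⟨x, rfl⟩
      exact subset_closure ⟨x, rfl⟩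
    · intro hz
      obtain ⟨x, hx⟩ := mem_range_of_mem_closure x₀ z.2 hz
      exact ⟨x, Subtype.ext hx⟩
  rw [hset]
  exact isClosed_closure.preimage continuous_subtype_val

end EpsilonHomotopyAux

open EpsilonHomotopyAux

/-- For every metric ANR `K` there is a function `ε : K → (0, ∞)` such that
any two continuous maps `f, g : X → K` from a metric space `X` that are `W`-close with respect
to the cover `W = {B(y, ε y) : y ∈ K}` are homotopic. -/
theorem exists_epsilon_homotopy {K : Type u} [MetricSpace K] (hK : IsMetricANR K) :
    ∃ ε : K → ℝ, (∀ y, 0 < ε y) ∧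
      ∀ (X : Type v) [MetricSpace X] (f g : C(X, K)),
        (∀ x : X, ∃ y : K, dist (f x) y < ε y ∧ dist (g x) y < ε y) →
        f.Homotopic g := by
  classical
  obtain hKe | hKn := isEmpty_or_nonempty K
  · refine ⟨fun _ => 1, fun _ => one_pos, ?_⟩
    intro X _ f g _
    rcases isEmpty_or_nonempty X with hX | hX
    · have h : ContinuousMap.Homotopy f g :=
        { toFun := fun p => f p.2
          continuous_toFun := by fun_prop
          map_zero_left := fun x => rfl
          map_one_left := fun x => isEmptyElim x }
      exact ⟨h⟩
    · exact (hKe.false (f (Classical.arbitrary X))).elim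
  · set x₀ := Classical.arbitrary K
    set C := convexHull ℝ (range (theta x₀)) with hC
    obtain ⟨U, hUopen, hUsub, r, hr_range, hr_fix⟩ :=
      hK.2 (↥C) inferInstance (emb x₀) (isClosedEmbedding_emb x₀)
    obtain ⟨O, hOopen, hOU⟩ := isOpen_induced_iff.mp hUopen
    have hball : ∀ y : K, ∃ δ > (0:ℝ), ball (theta x₀ y) δ ⊆ O := by
      intro y
      have hmem : theta x₀ y ∈ O := by
        have : emb x₀ y ∈ U := hUsub (mem_range_self y)
        rw [← hOU] at this
        exact this
      obtain ⟨δ, hδ, hsub⟩ := Metric.isOpen_iff.mp hOopen _ hmem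
      exact ⟨δ, hδ, hsub⟩
    choose ε hεpos hεball using hball
    refine ⟨ε, hεpos, ?_⟩
    intro X _ f g hclose
    choose y hyf hyg using hclose
    set p : ↥unitInterval × X → BoundedContinuousFunction K ℝ := fun q =>
      (1 - (q.1 : ℝ)) • theta x₀ (f q.2) + (q.1 : ℝ) • theta x₀ (g q.2) with hp
    have hθc : Continuous (theta x₀) := (isometry_theta x₀).continuous
    have hIc : Continuous (fun q : ↥unitInterval × X => (q.1 : ℝ)) :=
      continuous_subtype_val.comp continuous_fst
    have hpc : Continuous p := by
      apply Continuous.add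
      · exact (continuous_const.sub hIc).smul (hθc.comp (f.continuous.comp continuous_snd))
      · exact hIc.smul (hθc.comp (g.continuous.comp continuous_snd))
    have hmemC : ∀ q : ↥unitInterval × X, p q ∈ C := by
      intro q
      refine (convex_convexHull ℝ (range (theta x₀)))
        (subset_convexHull ℝ (range (theta x₀)) (mem_range_self (f q.2)))
        (subset_convexHull ℝ (range (theta x₀)) (mem_range_self (g q.2)))
        (by linarith [q.1.2.2]) q.1.2.1 (by ring)
    have hmemO : ∀ q : ↥unitInterval × X, p q ∈ O := by
      intro q
      apply hεball (y q.2)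
      have hf : theta x₀ (f q.2) ∈ ball (theta x₀ (y q.2)) (ε (y q.2)) := by
        rw [mem_ball, (isometry_theta x₀).dist_eq]
        exact hyf q.2
      have hg : theta x₀ (g q.2) ∈ ball (theta x₀ (y q.2)) (ε (y q.2)) := by
        rw [mem_ball, (isometry_theta x₀).dist_eq]
        exact hyg q.2
      exact (convex_ball _ _) hf hg (by linarith [q.1.2.2]) q.1.2.1 (by ring)
    set P : ↥unitInterval × X → ↥U := fun q =>
      ⟨⟨p q, hmemC q⟩, by rw [← hOU]; exact hmemO q⟩ with hP
    have hPc : Continuous P := by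
      apply Continuous.subtype_mk
      exact hpc.subtype_mk _
    have hinj : Function.Injective (emb x₀) := (isometry_emb x₀).injective
    set H : ↥unitInterval × X → K := fun q => Function.invFun (emb x₀) (r (P q)) with hH
    have heH : ∀ q, emb x₀ (H q) = r (P q) := fun q => Function.invFun_eq (hr_range (P q))
    have hHc : Continuous H := by
      rw [(isometry_emb x₀).isEmbedding.toIsInducing.continuous_iff]
      have : (emb x₀ ∘ H) = fun q => (r (P q) : ↥C) := funext heH
      rw [this]
      exact r.continuous.comp hPc
    have hP0 : ∀ x : X, P (0, x) = ⟨emb x₀ (f x), hUsub (mem_range_self (f x))⟩ := by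
      intro x
      apply Subtype.ext
      apply Subtype.ext
      show p (0, x) = theta x₀ (f x)
      simp [hp]
    have hP1 : ∀ x : X, P (1, x) = ⟨emb x₀ (g x), hUsub (mem_range_self (g x))⟩ := by
      intro x
      apply Subtype.ext
      apply Subtype.ext
      show p (1, x) = theta x₀ (g x)
      simp [hp]
    have hhom : ContinuousMap.Homotopy f g :=
      { toFun := H
        continuous_toFun := hHc
        map_zero_left := fun x => by
          show Function.invFun (emb x₀) (r (P (0, x))) = f x
          rw [hP0 x, hr_fix (f x) _]
          exact Function.leftInverse_invFun hinj (f x)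
        map_one_left := fun x => by
          show Function.invFun (emb x₀) (r (P (1, x))) = g x
          rw [hP1 x, hr_fix (g x) _]
          exact Function.leftInverse_invFun hinj (g x) }
    exact ⟨hhom⟩
end

section
/- Let K be a metric ANR and y₀ ∈ K. Then the path space PK = {φ ∈ C([0,1], K) : φ(1) = y₀}, equipped with the supremum metric D'(φ, ψ) = sup_{t∈[0,1]} d(φ(t), ψ(t)), is a metric ANR. -/
universe u

open Set Function Metric Topology BoundedContinuousFunction

universe v w

/-- **Dugundji extension theorem**: a map from a closed nonempty subset of a metric space into a
normed real vector space extends continuously, with values in the convex hull of the image. -/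
theorem dugundji_extension {Y : Type v} [MetricSpace Y] {E : Type w} [NormedAddCommGroup E]
    [NormedSpace ℝ E] {A : Set Y} (hA : IsClosed A) (hne : A.Nonempty) {f : Y → E}
    (hf : ContinuousOn f A) :
    ∃ F : Y → E, Continuous F ∧ Set.EqOn F f A ∧ ∀ y, F y ∈ convexHull ℝ (f '' A) := by
  classical
  set O : Set Y := Aᶜ with hO
  let R : O → ℝ := fun i => infDist (i : Y) A
  have hRpos : ∀ i : O, 0 < R i := fun i => (hA.notMem_iff_infDist_pos hne).1 i.2
  let u : O → Set O := fun i => Subtype.val ⁻¹' Metric.ball (i : Y) (R i / 3)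
  have hu_open : ∀ i, IsOpen (u i) := fun i => (Metric.isOpen_ball).preimage continuous_subtype_val
  have hu_cover : (univ : Set O) ⊆ ⋃ i, u i := fun x _ =>
    mem_iUnion.2 ⟨x, by simp only [u, mem_preimage, Metric.mem_ball, dist_self]
                        exact div_pos (hRpos x) (by norm_num)⟩
  obtain ⟨ρ, hρ⟩ := PartitionOfUnity.exists_isSubordinate isClosed_univ u hu_open hu_cover
  -- choose nearby points in A
  have hex : ∀ i : O, ∃ p ∈ A, dist (i : Y) p < 2 * R i := fun i =>
    (infDist_lt_iff hne).1 (by have := hRpos i; simp only [R] at this ⊢; linarith)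
  choose a ha hd using hex
  -- support estimate
  have hsupp : ∀ (i : O) (x : O), ρ i x ≠ 0 → dist (x : Y) (i : Y) < R i / 3 := by
    intro i x h
    have : x ∈ tsupport (ρ i) := subset_closure h
    have := hρ i this
    simpa [u, Metric.mem_ball, Subtype.dist_eq] using this
  -- key estimate: if ρ i x ≠ 0 and p ∈ A then dist (a i) p ≤ (9/2) * dist (x:Y) p
  have hkey : ∀ (i : O) (x : O), ρ i x ≠ 0 → ∀ p ∈ A,
      dist (a i) p ≤ (9 / 2) * dist (x : Y) p := by
    intro i x hix p hp
    have h1 : dist (x : Y) (i : Y) < R i / 3 := hsupp i x hix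
    have h2 : R i ≤ infDist (x : Y) A + dist (i : Y) (x : Y) := infDist_le_infDist_add_dist
    have h3 : infDist (x : Y) A ≤ dist (x : Y) p := infDist_le_dist_of_mem hp
    have h4 : dist (i : Y) (x : Y) = dist (x : Y) (i : Y) := dist_comm _ _
    have hR : R i ≤ (3 / 2) * dist (x : Y) p := by
      have := hRpos i; rw [h4] at h2; linarith
    have h5 : dist (a i) p ≤ dist (a i) (i : Y) + dist (i : Y) (x : Y) + dist (x : Y) p :=
      dist_triangle4 _ _ _ _
    have h6 : dist (a i) (i : Y) < 2 * R i := by rw [dist_comm]; exact hd i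
    rw [h4] at h5
    linarith
  -- the extension
  let F : Y → E := fun y => if hy : y ∈ A then f y else ∑ᶠ i, ρ i ⟨y, hy⟩ • f (a i)
  have hFA : Set.EqOn F f A := fun y hy => dif_pos hy
  have hhull : ∀ y, F y ∈ convexHull ℝ (f '' A) := by
    intro y
    by_cases hy : y ∈ A
    · rw [hFA hy]
      exact subset_convexHull _ _ (mem_image_of_mem f hy)
    · show (if hy' : y ∈ A then f y else ∑ᶠ i, ρ i ⟨y, hy'⟩ • f (a i)) ∈ _
      rw [dif_neg hy]
      exact ρ.finsum_smul_mem_convex (g := fun i _ => f (a i)) (mem_univ _)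
        (fun i _ => subset_convexHull _ _ (mem_image_of_mem f (ha i)))
        (convex_convexHull _ _)
  have hFO : ContinuousOn F O := by
    rw [continuousOn_iff_continuous_restrict]
    have hres : O.domRestrict F = fun x : O => ∑ᶠ i, ρ i x • f (a i) := by
      funext x
      simp only [Set.domRestrict_apply, F, dif_neg x.2]
    rw [hres]
    exact hρ.continuous_finsum_smul hu_open (fun i => continuousOn_const)
  have hFAcont : ∀ p ∈ A, ContinuousAt F p := by
    intro p hp
    rw [Metric.continuousAt_iff]
    intro ε hε
    obtain ⟨δ, hδ, hδf⟩ := Metric.continuousWithinAt_iff.1 (hf p hp) (ε / 2) (by linarith)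
    refine ⟨δ / 5, by positivity, fun {y} hy => ?_⟩
    have hFp : F p = f p := hFA hp
    by_cases hyA : y ∈ A
    · rw [hFA hyA, hFp]
      exact lt_of_lt_of_le (hδf hyA (by linarith)) (by linarith)
    · have hmem : F y ∈ Metric.closedBall (f p) (ε / 2) := by
        show (if hy' : y ∈ A then f y else ∑ᶠ i, ρ i ⟨y, hy'⟩ • f (a i)) ∈ _
        rw [dif_neg hyA]
        refine ρ.finsum_smul_mem_convex (g := fun i _ => f (a i)) (mem_univ _) (fun i hi => ?_) (convex_closedBall _ _)
        have hdist : dist (a i) p ≤ (9 / 2) * dist y p := hkey i ⟨y, hyA⟩ hi p hp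
        have : dist (a i) p < δ := by
          have h0 : (0:ℝ) ≤ dist y p := dist_nonneg
          linarith
        exact Metric.mem_closedBall.2 (le_of_lt (hδf (ha i) this))
      rw [hFp] at *
      calc dist (F y) (f p) ≤ ε / 2 := Metric.mem_closedBall.1 hmem
        _ < ε := by linarith
  refine ⟨F, ?_, hFA, hhull⟩
  rw [← continuousOn_univ]
  have huniv : (univ : Set Y) = O ∪ A := by
    simp [O, compl_union_self]
  rw [huniv]
  exact hFO.union_continuousAt hA.isOpen_compl hFAcont



variable {K : Type u} [MetricSpace K]

/-- Kuratowski-type isometric embedding of a metric space into bounded continuous functions. -/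
noncomputable def kurMap (x₀ : K) (x : K) : BoundedContinuousFunction K ℝ :=
  BoundedContinuousFunction.mkOfBound
    ⟨fun y => dist x y - dist x₀ y,
      ((continuous_const.dist continuous_id).sub (continuous_const.dist continuous_id))⟩
    (2 * dist x x₀)
    (by
      intro y z
      have h1 := abs_dist_sub_le x x₀ y
      have h2 := abs_dist_sub_le x x₀ z
      rw [abs_le] at h1 h2
      rw [Real.dist_eq]
      rw [abs_le]
      constructor <;> simp only [ContinuousMap.coe_mk] <;> linarith [h1.1, h1.2, h2.1, h2.2])

@[simp] lemma kurMap_apply (x₀ x y : K) : kurMap x₀ x y = dist x y - dist x₀ y := rfl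

lemma kurMap_isometry (x₀ : K) : Isometry (kurMap x₀) := by
  refine Isometry.of_dist_eq fun x y => le_antisymm ?_ ?_
  · refine (BoundedContinuousFunction.dist_le dist_nonneg).2 fun z => ?_
    rw [Real.dist_eq]
    simp only [kurMap_apply]
    have := abs_dist_sub_le x y z
    have h : dist x z - dist x₀ z - (dist y z - dist x₀ z) = dist x z - dist y z := by ring
    rw [h]
    exact this
  · have h2 := BoundedContinuousFunction.dist_coe_le_dist (f := kurMap x₀ x) (g := kurMap x₀ y) y
    rw [Real.dist_eq] at h2
    simp only [kurMap_apply, dist_self, zero_sub] at h2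
    have h3 : dist x y - dist x₀ y - -dist x₀ y = dist x y := by ring
    rw [h3, abs_of_nonneg dist_nonneg] at h2
    exact h2

/-- **Wojdysławski's lemma**: the image of the Kuratowski embedding is closed in its convex
hull. -/
lemma kurMap_closure_inter_hull [Nonempty K] (x₀ : K) {g : BoundedContinuousFunction K ℝ}
    (hg : g ∈ convexHull ℝ (Set.range (kurMap x₀)))
    (hcl : g ∈ closure (Set.range (kurMap x₀))) : g ∈ Set.range (kurMap x₀) := by
  rw [convexHull_eq] at hg
  obtain ⟨ι, t, w, zf, hw0, hw1, hz, hgm⟩ := hg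
  have hz' : ∀ i : ι, ∃ xx : K, i ∈ t → kurMap x₀ xx = zf i := by
    intro i
    by_cases hi : i ∈ t
    · obtain ⟨xx, hxx⟩ := hz i hi
      exact ⟨xx, fun _ => hxx⟩
    · exact ⟨Classical.arbitrary K, fun h => absurd h hi⟩
  choose x hx using hz'
  have hgsum : g = ∑ i ∈ t, w i • kurMap x₀ (x i) := by
    rw [← hgm, Finset.centerMass_eq_of_sum_1 _ _ hw1]
    exact Finset.sum_congr rfl fun i hi => by rw [hx i hi]
  -- evaluation formula
  have hgp : ∀ p : K, g p = (∑ i ∈ t, w i * dist (x i) p) - dist x₀ p := by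
    intro p
    rw [hgsum]
    rw [BoundedContinuousFunction.coe_sum, Finset.sum_apply]
    simp only [BoundedContinuousFunction.coe_smul, Pi.smul_apply, kurMap_apply, smul_eq_mul]
    rw [Finset.sum_congr rfl (fun i _ => mul_sub (w i) (dist (x i) p) (dist x₀ p)),
      Finset.sum_sub_distrib, ← Finset.sum_mul, hw1, one_mul]
  -- find an index with positive weight
  have hpos : ∃ i ∈ t, 0 < w i := by
    by_contra h
    push_neg at h
    have : ∑ i ∈ t, w i ≤ 0 := Finset.sum_nonpos fun i hi => h i hi
    rw [hw1] at this; linarith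
  obtain ⟨i₀, hi₀, hwi₀⟩ := hpos
  -- show g = kurMap x₀ (x i₀)
  refine ⟨x i₀, ?_⟩
  have key : ∀ ε > (0:ℝ), dist g (kurMap x₀ (x i₀)) ≤ ε := by
    intro ε hε
    set c := w i₀
    set η := ε * c / (c + 1) with hη
    have hηpos : 0 < η := by positivity
    obtain ⟨b, ⟨p, rfl⟩, hb⟩ := Metric.mem_closure_iff.1 hcl η hηpos
    -- evaluate at p
    have hev := BoundedContinuousFunction.dist_coe_le_dist (f := g) (g := kurMap x₀ p) p
    have hev2 : |∑ i ∈ t, w i * dist (x i) p| < η := by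
      rw [Real.dist_eq] at hev
      rw [hgp p] at hev
      simp only [kurMap_apply, dist_self, zero_sub] at hev
      have : dist (x i₀) p * 0 = 0 := by ring
      calc |∑ i ∈ t, w i * dist (x i) p|
          = |(∑ i ∈ t, w i * dist (x i) p) - dist x₀ p - (0 - dist x₀ p)| := by ring_nf
        _ ≤ dist g (kurMap x₀ p) := by
            have := hev; simpa using this
        _ < η := hb
    have hterm : c * dist (x i₀) p ≤ ∑ i ∈ t, w i * dist (x i) p := by
      refine Finset.single_le_sum (f := fun i => w i * dist (x i) p) ?_ hi₀
      intro i hi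
      exact mul_nonneg (hw0 i hi) dist_nonneg
    have hxd : dist (x i₀) p < η / c := by
      rw [lt_div_iff₀ hwi₀]
      have hsum_lt : ∑ i ∈ t, w i * dist (x i) p < η := (abs_lt.1 hev2).2
      calc dist (x i₀) p * c = c * dist (x i₀) p := by ring
        _ ≤ _ := hterm
        _ < η := hsum_lt
    have : dist g (kurMap x₀ (x i₀)) ≤ dist g (kurMap x₀ p) + dist (kurMap x₀ p) (kurMap x₀ (x i₀)) :=
      dist_triangle _ _ _
    rw [(kurMap_isometry x₀).dist_eq] at this
    have hfinal : dist g (kurMap x₀ (x i₀)) < η + η / c := by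
      have := this
      rw [dist_comm p (x i₀)] at this
      linarith
    have heq : η + η / c = ε := by
      rw [hη]
      field_simp
    linarith
  have : dist g (kurMap x₀ (x i₀)) ≤ 0 := le_of_forall_pos_le_add (by intro ε hε; simpa using key ε hε)
  exact (eq_of_dist_eq_zero (le_antisymm this dist_nonneg)).symm

/-- The neighborhood extension property of metric ANRs. -/
theorem IsMetricANR.exists_extension {K : Type u} [MetricSpace K] [Nonempty K]
    (hK : IsMetricANR K) {Y : Type v} [TopologicalSpace Y]
    [TopologicalSpace.MetrizableSpace Y] {A : Set Y} (hA : IsClosed A) {f : Y → K}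
    (hf : ContinuousOn f A) :
    ∃ V : Set Y, IsOpen V ∧ A ⊆ V ∧ ∃ g : Y → K, ContinuousOn g V ∧ Set.EqOn g f A := by
  classical
  rcases A.eq_empty_or_nonempty with hAe | hne
  · exact ⟨univ, isOpen_univ, subset_univ A, fun _ => Classical.arbitrary K, continuousOn_const,
      hAe ▸ Set.eqOn_empty _ _⟩
  letI : MetricSpace Y := TopologicalSpace.metrizableSpaceMetric Y
  set x₀ := Classical.arbitrary K with hx₀
  set j := kurMap x₀ with hjdef
  have hj : Isometry j := kurMap_isometry x₀
  set C : Set (BoundedContinuousFunction K ℝ) := convexHull ℝ (Set.range j) with hCdef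
  have hmemC : ∀ x : K, j x ∈ C := fun x => subset_convexHull _ _ (mem_range_self x)
  set j' : K → ↥C := fun x => ⟨j x, hmemC x⟩ with hj'def
  have hj'iso : Isometry j' := Isometry.of_dist_eq fun x y => by
    rw [Subtype.dist_eq]; exact hj.dist_eq x y
  have hrange : Set.range j' = Subtype.val ⁻¹' closure (Set.range j) := by
    apply Subset.antisymm
    · rintro _ ⟨x, rfl⟩
      exact subset_closure (mem_range_self x)
    · rintro v hv
      obtain ⟨x, hx⟩ := kurMap_closure_inter_hull x₀ v.2 hv
      exact ⟨x, Subtype.ext hx⟩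
  have hj'closed : Topology.IsClosedEmbedding j' :=
    ⟨hj'iso.isEmbedding, by
      rw [hrange]; exact isClosed_closure.preimage continuous_subtype_val⟩
  obtain ⟨U, hUopen, hUrange, r, hr1, hr2⟩ := hK.2 (↥C) inferInstance j' hj'closed
  -- Dugundji extension of `j ∘ f`
  have hfE : ContinuousOn (fun y => j (f y)) A := hj.continuous.comp_continuousOn hf
  obtain ⟨F, hFc, hFeq, hFhull⟩ := dugundji_extension hA hne hfE
  have hFC : ∀ y, F y ∈ C := fun y => by
    refine convexHull_mono ?_ (hFhull y)
    rintro _ ⟨yy, _, rfl⟩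
    exact mem_range_self _
  set F' : Y → ↥C := fun y => ⟨F y, hFC y⟩ with hF'def
  have hF'c : Continuous F' := hFc.subtype_mk _
  set V := F' ⁻¹' U with hVdef
  have hVopen : IsOpen V := hUopen.preimage hF'c
  have hAV : A ⊆ V := fun p hp => by
    have h1 : F' p = j' (f p) := Subtype.ext (hFeq hp)
    show F' p ∈ U
    rw [h1]
    exact hUrange (mem_range_self _)
  -- inverse of the embedding
  set e := Isometry.isometryEquivOnRange hj with hedef
  set ψ : ↥(Set.range j) → K := fun v => e.symm v with hψdef
  have hψcont : Continuous ψ := e.symm.continuous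
  have hjψ : ∀ v : ↥(Set.range j), j (ψ v) = (v : BoundedContinuousFunction K ℝ) := by
    intro v
    have := e.apply_symm_apply v
    exact congrArg Subtype.val this
  have hψj : ∀ (x : K) (h : j x ∈ Set.range j), ψ ⟨j x, h⟩ = x := by
    intro x h
    have := hjψ ⟨j x, h⟩
    exact hj.injective this
  have hval : ∀ u : ↥U, ((r u : ↥C) : BoundedContinuousFunction K ℝ) ∈ Set.range j := by
    intro u
    obtain ⟨x, hx⟩ := hr1 u
    exact ⟨x, by rw [← hx]⟩
  set g : Y → K := fun y => if hy : y ∈ V then ψ ⟨_, hval ⟨F' y, hy⟩⟩ else x₀ with hgdef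
  have hgV : ContinuousOn g V := by
    rw [continuousOn_iff_continuous_restrict]
    have hres : V.domRestrict g = fun v : ↥V => ψ ⟨_, hval ⟨F' ↑v, v.2⟩⟩ := by
      funext v
      simp only [Set.domRestrict_apply, g, dif_pos v.2]
    rw [hres]
    exact hψcont.comp <| Continuous.subtype_mk
      (continuous_subtype_val.comp <| r.continuous.comp <|
        Continuous.subtype_mk (hF'c.comp continuous_subtype_val) _) _
  have hgeq : Set.EqOn g f A := by
    intro p hp
    have hy : p ∈ V := hAV hp
    have hFp : F' p = j' (f p) := Subtype.ext (hFeq hp)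
    have h' : j' (f p) ∈ U := hUrange (mem_range_self _)
    have hRR : r ⟨F' p, hy⟩ = j' (f p) := by
      have hsub : (⟨F' p, hy⟩ : ↥U) = ⟨j' (f p), h'⟩ := Subtype.ext hFp
      rw [hsub]
      exact hr2 (f p) h'
    show (if hy' : p ∈ V then ψ ⟨_, hval ⟨F' p, hy'⟩⟩ else x₀) = f p
    rw [dif_pos hy]
    have hvv : ((r ⟨F' p, hy⟩ : ↥C) : BoundedContinuousFunction K ℝ) = j (f p) := by
      rw [hRR]
    have hsub2 : (⟨_, hval ⟨F' p, hy⟩⟩ : ↥(Set.range j)) = ⟨j (f p), mem_range_self _⟩ :=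
      Subtype.ext hvv
    rw [hsub2, hψj]
  exact ⟨V, hVopen, hAV, g, hgV, hgeq⟩

lemma continuousOn_union_of_isClosed' {X W : Type*} [TopologicalSpace X] [TopologicalSpace W]
    {s t : Set X} {f : X → W} (hs : IsClosed s) (ht : IsClosed t)
    (hfs : ContinuousOn f s) (hft : ContinuousOn f t) : ContinuousOn f (s ∪ t) := by
  intro x _
  apply ContinuousWithinAt.union
  · by_cases h : x ∈ s
    · exact hfs x h
    · exact continuousWithinAt_of_notMem_closure (by rwa [hs.closure_eq])
  · by_cases h : x ∈ t
    · exact hft x h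
    · exact continuousWithinAt_of_notMem_closure (by rwa [ht.closure_eq])

set_option maxHeartbeats 1000000 in
set_option synthInstance.maxHeartbeats 400000 in
/-- If `K` is a metric ANR and `y₀ ∈ K`, then the path space
`PK = {φ ∈ C([0,1], K) : φ 1 = y₀}`, with the supremum metric (the metric induced from the
metric on `C([0,1], K)`, which is the sup metric since `[0,1]` is compact), is a metric ANR. -/
theorem pathSpace_isMetricANR {K : Type u} [MetricSpace K] (hK : IsMetricANR K) (y₀ : K) :
    IsMetricANR {φ : C(unitInterval, K) // φ 1 = y₀} := by
  classical
  haveI : Nonempty K := ⟨y₀⟩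
  constructor
  · infer_instance
  intro Z _ hZ e he
  haveI := hZ
  set H : {φ : C(unitInterval, K) // φ 1 = y₀} ≃ₜ ↥(Set.range e) :=
    Topology.IsEmbedding.toHomeomorph he.toIsEmbedding with hHdef
  set f : Z × unitInterval → K := fun p =>
    if h : p.1 ∈ Set.range e then ((H.symm ⟨p.1, h⟩ : {φ : C(unitInterval, K) // φ 1 = y₀}) :
      C(unitInterval, K)) p.2 else y₀
    with hfdef
  set A : Set (Z × unitInterval) :=
    (Set.range e ×ˢ univ) ∪ (univ ×ˢ ({1} : Set unitInterval)) with hAdef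
  have hAclosed : IsClosed A :=
    (he.isClosed_range.prod isClosed_univ).union (isClosed_univ.prod isClosed_singleton)
  have hfend : ∀ z : Z, f (z, 1) = y₀ := by
    intro z
    by_cases h : z ∈ Set.range e
    · show (if h' : z ∈ Set.range e then _ else _) = y₀
      rw [dif_pos h]
      exact (H.symm ⟨z, h⟩).2
    · exact dif_neg h
  have hfrange : ∀ (φ : {φ : C(unitInterval, K) // φ 1 = y₀}) (t : unitInterval), f (e φ, t) = (φ : C(unitInterval, K)) t := by
    intro φ t
    show (if h' : e φ ∈ Set.range e then _ else _) = _
    rw [dif_pos (mem_range_self φ)]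
    have h0 : (⟨e φ, mem_range_self φ⟩ : ↥(Set.range e)) = H φ := Subtype.ext rfl
    rw [h0, Homeomorph.symm_apply_apply]
  have hcont1 : ContinuousOn f (Set.range e ×ˢ (univ : Set unitInterval)) := by
    rw [continuousOn_iff_continuous_restrict]
    have hres : (Set.range e ×ˢ (univ : Set unitInterval)).domRestrict f =
        fun x => ((H.symm ⟨x.val.1, x.property.1⟩ : {φ : C(unitInterval, K) // φ 1 = y₀}) : C(unitInterval, K))
          x.val.2 := by
      funext x
      simp only [Set.domRestrict_apply]
      exact dif_pos x.property.1
    rw [hres]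
    have hc1 : Continuous fun x : ↥(Set.range e ×ˢ (univ : Set unitInterval)) =>
        ((H.symm ⟨x.val.1, x.property.1⟩ : {φ : C(unitInterval, K) // φ 1 = y₀}) : C(unitInterval, K)) :=
      continuous_subtype_val.comp (H.symm.continuous.comp (Continuous.subtype_mk
        (continuous_fst.comp continuous_subtype_val) _))
    exact hc1.eval (continuous_snd.comp continuous_subtype_val)
  have hcont2 : ContinuousOn f ((univ : Set Z) ×ˢ ({1} : Set unitInterval)) := by
    refine (continuousOn_const (c := y₀)).congr ?_
    rintro ⟨z, t⟩ ⟨-, ht⟩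
    have h1 : t = 1 := ht
    subst h1
    exact hfend z
  have hfA : ContinuousOn f A :=
    continuousOn_union_of_isClosed' (he.isClosed_range.prod isClosed_univ)
      (isClosed_univ.prod isClosed_singleton) hcont1 hcont2
  obtain ⟨V, hVopen, hAV, g, hgV, hgA⟩ := hK.exists_extension hAclosed hfA
  set U : Set Z := {z | ∀ t : unitInterval, (z, t) ∈ V} with hUdef
  have hUopen : IsOpen U := by
    rw [isOpen_iff_forall_mem_open]
    intro z hz
    obtain ⟨u, v, huo, _, hzu, hvuniv, huv⟩ := generalized_tube_lemma isCompact_singleton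
      (isCompact_univ (X := unitInterval)) hVopen (by
        rintro ⟨a, b⟩ ⟨ha, -⟩
        have h1 : a = z := ha
        subst h1
        exact hz b)
    exact ⟨u, fun z' hz' t => huv ⟨hz', hvuniv (mem_univ t)⟩, huo, singleton_subset_iff.1 hzu⟩
  have hUe : Set.range e ⊆ U := by
    rintro _ ⟨φ, rfl⟩
    intro t
    exact hAV (Or.inl ⟨mem_range_self φ, mem_univ t⟩)
  set G : C(↥U × unitInterval, K) := ⟨fun p => g ((p.1 : Z), p.2), by
    have hres : (fun p : ↥U × unitInterval => g ((p.1 : Z), p.2)) =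
        (V.restrict g) ∘ (fun p : ↥U × unitInterval => (⟨((p.1 : Z), p.2), p.1.2 p.2⟩ : ↥V)) :=
      rfl
    rw [hres]
    exact (continuousOn_iff_continuous_restrict.mp hgV).comp
      (Continuous.subtype_mk ((continuous_subtype_val.comp continuous_fst).prodMk
        continuous_snd) _)⟩ with hGdef
  set pathOf : ↥U → {φ : C(unitInterval, K) // φ 1 = y₀} := fun z => ⟨G.curry z, by
    show g ((z : Z), 1) = y₀
    have h1 : ((z : Z), (1 : unitInterval)) ∈ A := Or.inr ⟨mem_univ _, rfl⟩
    rw [hgA h1]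
    exact hfend z⟩ with hpdef
  have hpathc : Continuous pathOf := Continuous.subtype_mk G.curry.continuous _
  refine ⟨U, hUopen, hUe, ⟨fun z => e (pathOf z), he.continuous.comp hpathc⟩,
    fun z => ⟨pathOf z, rfl⟩, ?_⟩
  intro φ h
  show e (pathOf ⟨e φ, h⟩) = e φ
  congr 1
  apply Subtype.ext
  apply ContinuousMap.ext
  intro t
  show g (e φ, t) = (φ : C(unitInterval, K)) t
  have hmem : ((e φ : Z), t) ∈ A := Or.inl ⟨mem_range_self φ, mem_univ t⟩
  rw [hgA hmem]
  exact hfrange φ t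
end

section
/- Let f : X → Y be a continuous map from a metric space X to a metric ANR Y. Then cat_g f = cat f, where cat_g f (respectively cat f) is the least n ∈ ℕ such that X is the union of n+1 arbitrary subsets (respectively n+1 open subsets) on each of which the restriction of f is nullhomotopic, and ∞ if no such n exists. -/
universe u

/-- The generalized LS-category `cat_g f` of a map `f : X → Y`: the least `n ∈ ℕ∞` such that
`X` is covered by `n + 1` arbitrary subsets on each of which `f` restricts to a
nullhomotopic map (and `∞` if no such `n` exists). -/
noncomputable def catg {X Y : Type*} [TopologicalSpace X] [TopologicalSpace Y]
    (f : C(X, Y)) : ℕ∞ :=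
  sInf {n : ℕ∞ | ∃ m : ℕ, n = (m : ℕ∞) ∧ ∃ A : Fin (m + 1) → Set X,
    (∀ x, ∃ i, x ∈ A i) ∧ ∀ i, (f.restrict (A i)).Nullhomotopic}

/-- The (classical) LS-category `cat f` of a map `f : X → Y`: the least `n ∈ ℕ∞` such that
`X` is covered by `n + 1` *open* subsets on each of which `f` restricts to a
nullhomotopic map (and `∞` if no such `n` exists). -/
noncomputable def catOpen {X Y : Type*} [TopologicalSpace X] [TopologicalSpace Y]
    (f : C(X, Y)) : ℕ∞ :=
  sInf {n : ℕ∞ | ∃ m : ℕ, n = (m : ℕ∞) ∧ ∃ A : Fin (m + 1) → Set X,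
    (∀ x, ∃ i, x ∈ A i) ∧ ∀ i, IsOpen (A i) ∧ (f.restrict (A i)).Nullhomotopic}

open Set Metric Topology unitInterval

section Kur
variable {Y : Type u} [MetricSpace Y]

/-- Kuratowski-type embedding `y ↦ dist y · - dist y₀ ·` into bounded continuous functions. -/
noncomputable def kur (y₀ y : Y) : BoundedContinuousFunction Y ℝ :=
  BoundedContinuousFunction.mkOfBound
    ⟨fun z => dist y z - dist y₀ z, by fun_prop⟩ (2 * dist y y₀)
    (fun z z' => by
      have h1 : |dist y z - dist y₀ z| ≤ dist y y₀ := abs_dist_sub_le _ _ _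
      have h2 : |dist y z' - dist y₀ z'| ≤ dist y y₀ := abs_dist_sub_le _ _ _
      rw [Real.dist_eq]
      calc |(dist y z - dist y₀ z) - (dist y z' - dist y₀ z')|
          ≤ |dist y z - dist y₀ z| + |dist y z' - dist y₀ z'| := abs_sub _ _
        _ ≤ dist y y₀ + dist y y₀ := add_le_add h1 h2
        _ = 2 * dist y y₀ := by ring)

@[simp] lemma kur_apply (y₀ y z : Y) : kur y₀ y z = dist y z - dist y₀ z := rfl

lemma kur_isometry (y₀ : Y) : Isometry (kur y₀) := by
  apply Isometry.of_dist_eq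
  intro y y'
  apply le_antisymm
  · refine (BoundedContinuousFunction.dist_le dist_nonneg).2 fun z => ?_
    simp only [kur_apply, Real.dist_eq]
    have : (dist y z - dist y₀ z) - (dist y' z - dist y₀ z) = dist y z - dist y' z := by ring
    rw [this]
    exact abs_dist_sub_le _ _ _
  · have := BoundedContinuousFunction.dist_coe_le_dist (f := kur y₀ y) (g := kur y₀ y') y'
    simp only [kur_apply, Real.dist_eq, dist_self] at this
    calc dist y y' = |(dist y y' - dist y₀ y') - (0 - dist y₀ y')| := by
          rw [show (dist y y' - dist y₀ y') - (0 - dist y₀ y') = dist y y' by ring,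
            abs_of_nonneg dist_nonneg]
      _ ≤ dist (kur y₀ y) (kur y₀ y') := this

/-- Wojdysławski: the Kuratowski image is closed in its convex hull. -/
lemma kur_mem_range_of_mem_hull (y₀ : Y) {w : BoundedContinuousFunction Y ℝ}
    (h1 : w ∈ convexHull ℝ (Set.range (kur y₀)))
    (h2 : w ∈ closure (Set.range (kur y₀))) : w ∈ Set.range (kur y₀) := by
  classical
  rw [convexHull_eq] at h1
  obtain ⟨ι, t, wt, zf, hw0, hw1, hzmem, hcm⟩ := h1
  have hb : ∀ i : ι, ∃ v : Y, i ∈ t → kur y₀ v = zf i := by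
    intro i
    by_cases h : i ∈ t
    · obtain ⟨v, hv⟩ := hzmem i h
      exact ⟨v, fun _ => hv⟩
    · exact ⟨y₀, fun h' => absurd h' h⟩
  choose b hbeq using hb
  -- a positive weight
  obtain ⟨i₀, hi₀t, hi₀pos⟩ : ∃ i ∈ t, 0 < wt i := by
    by_contra hc
    push_neg at hc
    have : ∑ i ∈ t, wt i ≤ 0 := Finset.sum_nonpos fun i hi => hc i hi
    linarith
  -- key evaluation identity
  have hval : ∀ y : Y, ∑ i ∈ t, wt i * dist (b i) y = w y + dist y₀ y := by
    intro y
    have hsum : w = ∑ i ∈ t, wt i • zf i := by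
      rw [← hcm, Finset.centerMass_eq_of_sum_1 _ _ hw1]
    have : w y = ∑ i ∈ t, wt i * (zf i y) := by
      rw [hsum, BoundedContinuousFunction.coe_sum, Finset.sum_apply]
      simp [BoundedContinuousFunction.coe_smul]
    rw [this]
    have hz : ∀ i ∈ t, wt i * (zf i y) = wt i * dist (b i) y - wt i * dist y₀ y := by
      intro i hi
      rw [← hbeq i hi, kur_apply]
      ring
    rw [Finset.sum_congr rfl hz, Finset.sum_sub_distrib, ← Finset.sum_mul, hw1]
    ring
  -- w is the image of b i₀
  refine ⟨b i₀, ?_⟩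
  have key : ∀ ε > 0, dist w (kur y₀ (b i₀)) < ε + ε / wt i₀ := by
    intro ε hε
    obtain ⟨v, hv, hvd⟩ := Metric.mem_closure_iff.1 h2 ε hε
    obtain ⟨y, rfl⟩ := hv
    -- dist from b i₀ to y is small
    have h0 : w y + dist y₀ y < ε := by
      have : |w y - kur y₀ y y| ≤ dist w (kur y₀ y) :=
        BoundedContinuousFunction.dist_coe_le_dist y |>.trans_eq' (by rw [Real.dist_eq])
      simp only [kur_apply, dist_self, zero_sub] at this
      have h' : w y + dist y₀ y ≤ |w y - -dist y₀ y| := by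
        rw [sub_neg_eq_add]; exact le_abs_self _
      linarith
    have hterm : wt i₀ * dist (b i₀) y ≤ ∑ i ∈ t, wt i * dist (b i) y :=
      Finset.single_le_sum (fun i hi => mul_nonneg (hw0 i hi) dist_nonneg) hi₀t
    have hby : dist (b i₀) y < ε / wt i₀ := by
      rw [lt_div_iff₀ hi₀pos]
      have := hval y
      nlinarith [dist_nonneg (x := b i₀) (y := y)]
    calc dist w (kur y₀ (b i₀)) ≤ dist w (kur y₀ y) + dist (kur y₀ y) (kur y₀ (b i₀)) :=
          dist_triangle _ _ _
      _ < ε + ε / wt i₀ := by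
          rw [(kur_isometry y₀).dist_eq]
          exact add_lt_add_of_lt_of_le hvd (by rw [dist_comm]; exact hby.le)
  have : dist w (kur y₀ (b i₀)) ≤ 0 := by
    by_contra hlt
    push_neg at hlt
    set d := dist w (kur y₀ (b i₀)) with hd
    have hq : 0 < min (d/4) (d/4 * wt i₀) := by positivity
    have := key _ hq
    have h1 : min (d/4) (d/4 * wt i₀) ≤ d/4 := min_le_left _ _
    have h2 : min (d/4) (d/4 * wt i₀) / wt i₀ ≤ d/4 := by
      rw [div_le_iff₀ hi₀pos]
      calc min (d/4) (d/4 * wt i₀) ≤ d/4 * wt i₀ := min_le_right _ _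
        _ = d/4 * wt i₀ := rfl
    linarith
  exact (eq_of_dist_eq_zero (le_antisymm this dist_nonneg)).symm

end Kur

theorem exists_open_nullhomotopic {X : Type u} [MetricSpace X] {Y : Type u} [TopologicalSpace Y]
    (hY : IsMetricANR Y) (f : C(X, Y)) (A : Set X)
    (h : (f.restrict A).Nullhomotopic) :
    ∃ U : Set X, IsOpen U ∧ A ⊆ U ∧ (f.restrict U).Nullhomotopic := by
  classical
  obtain ⟨y₀, ⟨H⟩⟩ := h
  haveI := hY.1
  letI : MetricSpace Y := TopologicalSpace.metrizableSpaceMetric Y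
  set E := BoundedContinuousFunction Y ℝ with hE
  set e : Y → E := kur y₀ with he
  set Z0 : Set E := convexHull ℝ (Set.range e) with hZ0
  have he'memZ0 : ∀ y : Y, e y ∈ Z0 := fun y => subset_convexHull ℝ _ (mem_range_self y)
  set e' : Y → Z0 := fun y => ⟨e y, he'memZ0 y⟩ with he'
  have he'iso : Isometry e' := by
    apply Isometry.of_dist_eq
    intro y y'
    exact (kur_isometry y₀).dist_eq y y'
  have hrange : ∀ z : Z0, z ∈ Set.range e' ↔ (z : E) ∈ Set.range e := by
    intro z
    constructor
    · rintro ⟨y, rfl⟩; exact mem_range_self y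
    · rintro ⟨y, hy⟩; exact ⟨y, Subtype.ext hy⟩
  have hclosed : IsClosed (Set.range e') := by
    apply isClosed_of_closure_subset
    intro z hz
    rw [hrange]
    apply kur_mem_range_of_mem_hull y₀ z.2
    have : Set.range e' = Subtype.val ⁻¹' (Set.range e) := by
      ext w; exact hrange w
    rw [this] at hz
    exact continuous_subtype_val.closure_preimage_subset _ hz
  have hce : Topology.IsClosedEmbedding e' := ⟨he'iso.isEmbedding, hclosed⟩
  obtain ⟨V, hVopen, hVsub, r, hr_range, hr_fix⟩ := hY.2 Z0 inferInstance e' hce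
  -- the "safety margin" function
  set δ : Y → ℝ := fun y => if Vᶜ.Nonempty then min 1 (infDist (e' y) Vᶜ) else 1 with hδ
  have hδpos : ∀ y, 0 < δ y := by
    intro y
    rw [hδ]
    by_cases hne : Vᶜ.Nonempty
    · simp only [hne, if_true]
      refine lt_min one_pos ?_
      exact (hVopen.isClosed_compl.notMem_iff_infDist_pos hne).1
        (fun hmem => hmem (hVsub (mem_range_self y)))
    · simp [hne]
  have hδmem : ∀ (z : Z0) (y : Y), dist z (e' y) < δ y → z ∈ V := by
    intro z y hlt
    by_cases hne : Vᶜ.Nonempty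
    · rw [hδ] at hlt; simp only [hne, if_true] at hlt
      by_contra hzv
      have : infDist (e' y) Vᶜ ≤ dist (e' y) z := infDist_le_dist_of_mem hzv
      rw [dist_comm] at this
      have := lt_of_lt_of_le (lt_of_lt_of_le hlt (min_le_right _ _)) this
      exact lt_irrefl _ this
    · rw [Set.not_nonempty_iff_eq_empty, ← Set.compl_univ, compl_inj_iff] at hne
      rw [hne]; trivial
  have hδlip : ∀ y y', δ y ≤ δ y' + dist y y' := by
    intro y y'
    rw [hδ]
    by_cases hne : Vᶜ.Nonempty
    · simp only [hne, if_true]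
      have h1 : infDist (e' y) Vᶜ ≤ infDist (e' y') Vᶜ + dist y y' := by
        have := infDist_le_infDist_add_dist (x := e' y) (y := e' y') (s := Vᶜ)
        rwa [he'iso.dist_eq] at this
      rcases le_total 1 (infDist (e' y') Vᶜ) with hc | hc
      · calc min 1 (infDist (e' y) Vᶜ) ≤ 1 := min_le_left _ _
          _ ≤ min 1 (infDist (e' y') Vᶜ) + dist y y' := by
              rw [min_eq_left hc]; linarith [dist_nonneg (x := y) (y := y')]
      · calc min 1 (infDist (e' y) Vᶜ) ≤ infDist (e' y) Vᶜ := min_le_right _ _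
          _ ≤ infDist (e' y') Vᶜ + dist y y' := h1
          _ = min 1 (infDist (e' y') Vᶜ) + dist y y' := by rw [min_eq_right hc]
    · simp only [hne, if_false]
      linarith [dist_nonneg (x := y) (y := y')]
  have hδcont : Continuous δ := by
    rw [hδ]
    by_cases hne : Vᶜ.Nonempty
    · simp only [hne, if_true]
      exact continuous_const.min ((continuous_infDist_pt _).comp (he'iso.continuous.comp continuous_id))
    · simp only [hne, if_false]; exact continuous_const
  -- the curried homotopy
  set Hc : C(↥A, C(I, Y)) := ContinuousMap.curry
    (H.toContinuousMap.comp ContinuousMap.prodSwap) with hHc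
  have hHc0 : ∀ a : ↥A, Hc a 0 = f a := fun a => H.apply_zero a
  have hHc1 : ∀ a : ↥A, Hc a 1 = y₀ := fun a => H.apply_one a
  -- radius functions
  have hρ' : ∀ a : ↥A, ∃ ρa, 0 < ρa ∧ ∀ t : I, ρa ≤ δ (Hc a t) := by
    intro a
    have hc : Continuous fun t : I => δ (Hc a t) := hδcont.comp (Hc a).continuous
    obtain ⟨t₀, -, ht₀⟩ := isCompact_univ.exists_isMinOn univ_nonempty hc.continuousOn
    exact ⟨δ (Hc a t₀), hδpos _, fun t => ht₀ (mem_univ t)⟩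
  choose ρ hρpos hρle using hρ'
  -- moduli of continuity
  have hε' : ∀ a : ↥A, ∃ εa, 0 < εa ∧
      (∀ b : ↥A, dist (b : X) (a : X) < εa → dist (Hc b) (Hc a) < ρ a / 4) ∧
      (∀ x : X, dist x (a : X) < εa → dist (f x) (f (a : X)) < ρ a / 4) := by
    intro a
    have hρ4 : 0 < ρ a / 4 := by have := hρpos a; linarith
    obtain ⟨ε₁, hε₁, h₁⟩ := Metric.continuous_iff.mp Hc.continuous a (ρ a / 4) hρ4
    obtain ⟨ε₂, hε₂, h₂⟩ := Metric.continuous_iff.mp f.continuous (a : X) (ρ a / 4) hρ4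
    refine ⟨min ε₁ ε₂, lt_min hε₁ hε₂, fun b hb => ?_, fun x hx => ?_⟩
    · exact h₁ b (lt_of_lt_of_le hb (min_le_left _ _))
    · exact h₂ x (lt_of_lt_of_le hx (min_le_right _ _))
  choose ε hεpos hεH hεf using hε'
  -- the open neighborhood
  set U : Set X := ⋃ a : ↥A, ball (a : X) (ε a / 4) with hU
  have hUopen : IsOpen U := isOpen_iUnion fun a => isOpen_ball
  have hAU : A ⊆ U := by
    intro x hx
    exact mem_iUnion.2 ⟨⟨x, hx⟩, mem_ball_self (by have := hεpos ⟨x, hx⟩; linarith)⟩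
  refine ⟨U, hUopen, hAU, ?_⟩
  -- partition of unity on the subtype ↥U
  set W : ↥A → Set ↥U := fun a => Subtype.val ⁻¹' ball (a : X) (ε a / 4) with hW
  have hWopen : ∀ a, IsOpen (W a) := fun a => isOpen_ball.preimage continuous_subtype_val
  have hWcover : (univ : Set ↥U) ⊆ ⋃ a, W a := by
    rintro ⟨x, hx⟩ -
    obtain ⟨a, hxa⟩ := mem_iUnion.1 hx
    exact mem_iUnion.2 ⟨a, hxa⟩
  obtain ⟨p, hp⟩ := PartitionOfUnity.exists_isSubordinate isClosed_univ W hWopen hWcover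
  -- the deformed images
  set eH : ↥A → I → E := fun a t => e (Hc a t) with heH
  have heHcont : ∀ a, Continuous (eH a) :=
    fun a => (kur_isometry y₀).continuous.comp (Hc a).continuous
  set g : ↥U × I → E := fun w => ∑ᶠ a, p a w.1 • eH a w.2 with hg
  have hgcont : Continuous g := by
    apply continuous_finsum
    · exact fun a => (((p a).continuous.comp continuous_fst).smul
        ((heHcont a).comp continuous_snd))
    · intro w
      obtain ⟨N, hN, hfin⟩ := p.locallyFinite w.1
      refine ⟨N ×ˢ univ, prod_mem_nhds hN Filter.univ_mem, hfin.subset ?_⟩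
      rintro a ⟨w', hw', hw'N⟩
      refine ⟨w'.1, ?_, hw'N.1⟩
      intro hz
      apply hw'
      simp only [Function.mem_support, ne_eq, not_not] at hz ⊢
      rw [hz, zero_smul]
  -- pointwise finset description
  have hgfin : ∀ (x : ↥U) (t : I),
      g (x, t) = ∑ a ∈ p.finsupport x, p a x • eH a t := by
    intro x t
    exact (p.sum_finsupport_smul_eq_finsum (fun a (_ : ↥U) => eH a t)).symm
  have hfsne : ∀ x : ↥U, (p.finsupport x).Nonempty := by
    intro x
    rcases Finset.eq_empty_or_nonempty (p.finsupport x) with hemp | hne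
    · exfalso
      have := p.sum_finsupport (mem_univ x)
      rw [hemp, Finset.sum_empty] at this
      exact zero_ne_one this
    · exact hne
  have hsupp_dist : ∀ (x : ↥U) (a : ↥A), a ∈ p.finsupport x →
      dist (x : X) (a : X) < ε a / 4 := by
    intro x a ha
    have hx : x ∈ Function.support (p a) := (p.mem_finsupport x).1 ha
    have := hp a (subset_tsupport _ hx)
    exact mem_ball.1 this
  have hgZ0 : ∀ w, g w ∈ Z0 := by
    rintro ⟨x, t⟩
    rw [hgfin x t]
    refine (convex_convexHull ℝ _).sum_mem (fun a _ => p.nonneg a x)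
      (p.sum_finsupport (mem_univ x)) (fun a _ => he'memZ0 _)
  -- the key estimate
  have hstar : ∀ x : ↥U, ∃ astar : ↥A,
      dist (x : X) (astar : X) < ε astar / 4 ∧
      ∀ t : I, ‖g (x, t) - eH astar t‖ < ρ astar / 4 := by
    intro x
    obtain ⟨astar, hastar_mem, hastar_max⟩ :=
      (p.finsupport x).exists_max_image ε (hfsne x)
    refine ⟨astar, hsupp_dist x astar hastar_mem, fun t => ?_⟩
    have hclose : ∀ a ∈ p.finsupport x, dist (Hc a t) (Hc astar t) < ρ astar / 4 := by
      intro a ha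
      have h1 : dist (a : X) (astar : X) < ε astar := by
        calc dist (a : X) (astar : X) ≤ dist (a : X) (x : X) + dist (x : X) (astar : X) :=
              dist_triangle _ _ _
          _ < ε a / 4 + ε astar / 4 := by
              rw [dist_comm (a : X) (x : X)]
              exact add_lt_add (hsupp_dist x a ha) (hsupp_dist x astar hastar_mem)
          _ ≤ ε astar / 4 + ε astar / 4 := by
              have := hastar_max a ha; linarith
          _ < ε astar := by have := hεpos astar; linarith
      have := hεH astar a h1
      exact lt_of_le_of_lt (ContinuousMap.dist_apply_le_dist t) this
    have hdiff : g (x, t) - eH astar t =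
        ∑ a ∈ p.finsupport x, p a x • (eH a t - eH astar t) := by
      rw [hgfin x t]
      rw [Finset.sum_congr rfl (fun a _ => smul_sub (p a x) (eH a t) (eH astar t)),
        Finset.sum_sub_distrib, ← Finset.sum_smul, p.sum_finsupport (mem_univ x), one_smul]
    rw [hdiff]
    calc ‖∑ a ∈ p.finsupport x, p a x • (eH a t - eH astar t)‖
        ≤ ∑ a ∈ p.finsupport x, ‖p a x • (eH a t - eH astar t)‖ := norm_sum_le _ _
      _ = ∑ a ∈ p.finsupport x, p a x * ‖eH a t - eH astar t‖ := by
          refine Finset.sum_congr rfl fun a _ => ?_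
          have hns := norm_smul (p a x) (eH a t - eH astar t)
          rw [hns, Real.norm_eq_abs, abs_of_nonneg (p.nonneg a x)]
      _ < ∑ a ∈ p.finsupport x, p a x * (ρ astar / 4) := by
          refine Finset.sum_lt_sum_of_nonempty (hfsne x) fun a ha => ?_
          have hpa : 0 < p a x := by
            have := (p.mem_finsupport x).1 ha
            exact lt_of_le_of_ne (p.nonneg a x) (Ne.symm this)
          have hne : ‖eH a t - eH astar t‖ < ρ astar / 4 := by
            rw [← dist_eq_norm]
            have : dist (eH a t) (eH astar t) = dist (Hc a t) (Hc astar t) :=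
              (kur_isometry y₀).dist_eq _ _
            rw [this]
            exact hclose a ha
          exact mul_lt_mul_of_pos_left hne hpa
      _ = ρ astar / 4 := by
          rw [← Finset.sum_mul, p.sum_finsupport (mem_univ x), one_mul]
  choose astar hstard hstarb using hstar
  have hgV : ∀ w : ↥U × I, (⟨g w, hgZ0 w⟩ : Z0) ∈ V := by
    rintro ⟨x, t⟩
    apply hδmem _ (Hc (astar x) t)
    have hd : dist (⟨g (x, t), hgZ0 (x, t)⟩ : Z0) (e' (Hc (astar x) t))
        = ‖g (x, t) - eH (astar x) t‖ := by
      rw [Subtype.dist_eq, dist_eq_norm]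
    rw [hd]
    calc ‖g (x, t) - eH (astar x) t‖ < ρ (astar x) / 4 := hstarb x t
      _ ≤ δ (Hc (astar x) t) := by
          have h1 := hρle (astar x) t
          have h2 := hρpos (astar x)
          linarith
  set φ := he'iso.isometryEquivOnRange with hφdef
  have hφ : ∀ z : Set.range e', e' (φ.symm z) = (z : Z0) :=
    fun z => Equiv.apply_ofInjective_symm he'iso.injective z
  set K : ↥U × I → Y := fun w => φ.symm ⟨r ⟨⟨g w, hgZ0 w⟩, hgV w⟩, hr_range _⟩ with hK
  have hKcont : Continuous K :=
    φ.symm.continuous.comp (Continuous.subtype_mk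
      (r.continuous.comp (Continuous.subtype_mk (Continuous.subtype_mk hgcont _) _)) _)
  have hKe' : ∀ w, (e' (K w) : Z0) = r ⟨⟨g w, hgZ0 w⟩, hgV w⟩ := fun w => hφ _
  -- endpoint t = 1
  have hg1 : ∀ x : ↥U, g (x, 1) = e y₀ := by
    intro x
    rw [hgfin x 1]
    have hc : ∀ a ∈ p.finsupport x, p a x • eH a 1 = p a x • e y₀ := by
      intro a _
      have : eH a 1 = e y₀ := by rw [heH]; simp only; rw [hHc1 a]
      rw [this]
    rw [Finset.sum_congr rfl hc, ← Finset.sum_smul, p.sum_finsupport (mem_univ x), one_smul]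
  have hK1 : ∀ x : ↥U, K (x, 1) = y₀ := by
    intro x
    apply he'iso.injective
    rw [hKe' (x, 1)]
    have hval : (⟨⟨g (x, 1), hgZ0 _⟩, hgV _⟩ : V) =
        ⟨e' y₀, hVsub (mem_range_self y₀)⟩ := by
      apply Subtype.ext; apply Subtype.ext; exact hg1 x
    rw [hval, hr_fix y₀ _]
  -- the straight-line part
  set G : ↥U × I → E := fun w => (1 - (w.2 : ℝ)) • e (f (w.1 : X)) + (w.2 : ℝ) • g (w.1, 0)
    with hG
  have hGcont : Continuous G := by
    apply Continuous.add
    · exact (continuous_const.sub (continuous_subtype_val.comp continuous_snd)).smul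
        ((kur_isometry y₀).continuous.comp
          (f.continuous.comp (continuous_subtype_val.comp continuous_fst)))
    · exact (continuous_subtype_val.comp continuous_snd).smul
        (hgcont.comp ((continuous_fst).prodMk continuous_const))
  have hGZ0 : ∀ w, G w ∈ Z0 := by
    rintro ⟨x, t⟩
    exact (convex_convexHull ℝ _) (he'memZ0 _) (hgZ0 (x, 0))
      (by have := t.2.2; simp only; linarith) t.2.1 (by ring)
  have hGest : ∀ w : ↥U × I, dist (⟨G w, hGZ0 w⟩ : Z0) (e' (f (w.1 : X))) < δ (f (w.1 : X)) := by
    rintro ⟨x, t⟩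
    have hb1 : ‖g (x, 0) - eH (astar x) 0‖ < ρ (astar x) / 4 := hstarb x 0
    have heH0 : eH (astar x) 0 = e (f ((astar x : X))) := by
      rw [heH]; simp only; rw [hHc0 (astar x)]
    have hdx : dist (x : X) ((astar x : X)) < ε (astar x) := by
      have h1 := hstard x
      have h2 := hεpos (astar x)
      linarith
    have hfd : dist (f (x : X)) (f ((astar x : X))) < ρ (astar x) / 4 := hεf (astar x) _ hdx
    have hb2 : ‖eH (astar x) 0 - e (f (x : X))‖ < ρ (astar x) / 4 := by
      rw [heH0, ← dist_eq_norm, (kur_isometry y₀).dist_eq, dist_comm]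
      exact hfd
    have hbound : ‖g (x, 0) - e (f (x : X))‖ < ρ (astar x) / 2 := by
      calc ‖g (x, 0) - e (f (x : X))‖
          ≤ ‖g (x, 0) - eH (astar x) 0‖ + ‖eH (astar x) 0 - e (f (x : X))‖ := by
            have := norm_sub_le_norm_sub_add_norm_sub (g (x, 0)) (eH (astar x) 0) (e (f (x : X)))
            exact this
        _ < ρ (astar x) / 4 + ρ (astar x) / 4 := add_lt_add hb1 hb2
        _ = ρ (astar x) / 2 := by ring
    have hδfx : ρ (astar x) / 2 < δ (f (x : X)) := by
      have h1 : δ (f ((astar x : X))) ≤ δ (f (x : X)) + dist (f ((astar x : X))) (f (x : X)) :=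
        hδlip _ _
      have h2 : ρ (astar x) ≤ δ (f ((astar x : X))) := by
        have := hρle (astar x) 0
        rwa [hHc0 (astar x)] at this
      rw [dist_comm] at h1
      have h3 := hρpos (astar x)
      linarith
    have hdeq : dist (⟨G (x, t), hGZ0 _⟩ : Z0) (e' (f (x : X)))
        = ‖G (x, t) - e (f (x : X))‖ := by
      rw [Subtype.dist_eq, dist_eq_norm]
    rw [hdeq]
    have hGdiff : G (x, t) - e (f (x : X)) = (t : ℝ) • (g (x, 0) - e (f (x : X))) := by
      rw [hG]; simp only
      rw [smul_sub]
      module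
    rw [hGdiff]
    have hns := norm_smul (t : ℝ) (g (x, 0) - e (f (x : X)))
    rw [hns, Real.norm_eq_abs, abs_of_nonneg t.2.1]
    calc (t : ℝ) * ‖g (x, 0) - e (f (x : X))‖ ≤ 1 * ‖g (x, 0) - e (f (x : X))‖ := by
          have := norm_nonneg (g (x, 0) - e (f (x : X)))
          exact mul_le_mul_of_nonneg_right t.2.2 this
      _ = ‖g (x, 0) - e (f (x : X))‖ := one_mul _
      _ < ρ (astar x) / 2 := hbound
      _ < δ (f (x : X)) := hδfx
  have hGV : ∀ w, (⟨G w, hGZ0 w⟩ : Z0) ∈ V := fun w => hδmem _ _ (hGest w)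
  set L : ↥U × I → Y := fun w => φ.symm ⟨r ⟨⟨G w, hGZ0 w⟩, hGV w⟩, hr_range _⟩ with hL
  have hLcont : Continuous L :=
    φ.symm.continuous.comp (Continuous.subtype_mk
      (r.continuous.comp (Continuous.subtype_mk (Continuous.subtype_mk hGcont _) _)) _)
  have hLe' : ∀ w, (e' (L w) : Z0) = r ⟨⟨G w, hGZ0 w⟩, hGV w⟩ := fun w => hφ _
  have hL0 : ∀ x : ↥U, L (x, 0) = f (x : X) := by
    intro x
    apply he'iso.injective
    rw [hLe' (x, 0)]
    have hG0 : G (x, 0) = e (f (x : X)) := by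
      rw [hG]; simp
    have hval : (⟨⟨G (x, 0), hGZ0 _⟩, hGV _⟩ : V) =
        ⟨e' (f (x : X)), hVsub (mem_range_self _)⟩ := by
      apply Subtype.ext; apply Subtype.ext; exact hG0
    rw [hval, hr_fix (f (x : X)) _]
  have hL1 : ∀ x : ↥U, L (x, 1) = K (x, 0) := by
    intro x
    apply he'iso.injective
    rw [hLe' (x, 1), hKe' (x, 0)]
    have hG1 : G (x, 1) = g (x, 0) := by
      rw [hG]; simp
    have hval : (⟨⟨G (x, 1), hGZ0 _⟩, hGV _⟩ : V) =
        ⟨⟨g (x, 0), hgZ0 _⟩, hgV _⟩ := by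
      apply Subtype.ext; apply Subtype.ext; exact hG1
    rw [hval]
  -- assemble the nullhomotopy
  refine ⟨y₀, ?_⟩
  have hKcont0 : Continuous fun x : ↥U => K (x, 0) :=
    hKcont.comp (continuous_id.prodMk continuous_const)
  have h1 : (f.restrict U).Homotopic ⟨fun x => K (x, 0), hKcont0⟩ :=
    ⟨⟨⟨fun q => L (q.2, q.1), hLcont.comp (continuous_snd.prodMk continuous_fst)⟩,
      fun x => hL0 x, fun x => hL1 x⟩⟩
  have h2 : ContinuousMap.Homotopic ⟨fun x : ↥U => K (x, 0), hKcont0⟩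
      (ContinuousMap.const ↥U y₀) :=
    ⟨⟨⟨fun q => K (q.2, q.1), hKcont.comp (continuous_snd.prodMk continuous_fst)⟩,
      fun x => rfl, fun x => hK1 x⟩⟩
  exact h1.trans h2


/-- For a continuous map `f : X → Y` from a metric space `X` to a metric
ANR `Y`, the generalized LS-category of `f` equals the classical LS-category of `f`. -/
theorem catg_eq_catOpen_of_ANR_target {X : Type u} [MetricSpace X]
    {Y : Type u} [TopologicalSpace Y] (hY : IsMetricANR Y) (f : C(X, Y)) :
    catg f = catOpen f := by
  apply le_antisymm
  · -- the easy inequality: every open witness is a witness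
    apply sInf_le_sInf
    rintro n ⟨m, hn, A, hcov, hA⟩
    exact ⟨m, hn, A, hcov, fun i => (hA i).2⟩
  · -- the hard inequality: enlarge arbitrary sets to open ones
    apply le_sInf
    rintro n ⟨m, rfl, A, hcov, hA⟩
    have hkey := fun i => exists_open_nullhomotopic hY f (A i) (hA i)
    choose U hUopen hAU hUnull using hkey
    apply sInf_le
    exact ⟨m, rfl, U, fun x => (hcov x).imp (fun i hi => hAU i hi),
      fun i => ⟨hUopen i, hUnull i⟩⟩
end
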